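/- arXiv:2108.07042 — 9 statements merged into one kernel-verified Lean document; each statement's English description precedes it below -/
import Mathlib

section
/- Let A be a finite set of k integers such that A ∩ (−A) = ∅ (i.e., no element of A is the negative of an element of A). Then for any integer α with 0 ≤ α ≤ k, the number of distinct subset sums of A coming from subsets of size at least α satisfies |Σ_α(A)| ≥ k(k+1)/2 − α(α+1)/2 + 1. -/
/-- `sigmaAtLeast A α` is the set of all subset sums of `A` coming from
subsets of size at least `α`. -/
def sigmaAtLeast (A : Finset ℤ) (α : ℕ) : Finset ℤ :=
  (A.powerset.filter (fun B => α ≤ B.card)).image (fun B => B.sum id)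

lemma mem_sigmaAtLeast {A B : Finset ℤ} {α : ℕ} (h1 : B ⊆ A) (h2 : α ≤ B.card) :
    B.sum id ∈ sigmaAtLeast A α :=
  Finset.mem_image.mpr ⟨B, Finset.mem_filter.mpr ⟨Finset.mem_powerset.mpr h1, h2⟩, rfl⟩

lemma sigma_neg (A : Finset ℤ) (α : ℕ) :
    sigmaAtLeast (A.image (fun x => -x)) α = (sigmaAtLeast A α).image (fun x => -x) := by
  ext s
  simp only [sigmaAtLeast, Finset.mem_image, Finset.mem_filter, Finset.mem_powerset]
  constructor
  · rintro ⟨B, ⟨hBA, hBc⟩, rfl⟩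
    refine ⟨(B.image (fun x => -x)).sum id, ⟨B.image (fun x => -x), ⟨?_, ?_⟩, rfl⟩, ?_⟩
    · intro x hx
      obtain ⟨b, hb, rfl⟩ := Finset.mem_image.mp hx
      obtain ⟨c, hc, rfl⟩ := Finset.mem_image.mp (hBA hb)
      simpa using hc
    · rwa [Finset.card_image_of_injective _ neg_injective]
    · rw [Finset.sum_image (fun x _ y _ h => neg_injective h)]
      simp only [id]
      rw [Finset.sum_neg_distrib, neg_neg]
  · rintro ⟨t, ⟨B, ⟨hBA, hBc⟩, rfl⟩, rfl⟩
    refine ⟨B.image (fun x => -x), ⟨?_, ?_⟩, ?_⟩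
    · exact Finset.image_subset_image hBA
    · rwa [Finset.card_image_of_injective _ neg_injective]
    · rw [Finset.sum_image (fun x _ y _ h => neg_injective h)]
      simp only [id]
      rw [Finset.sum_neg_distrib]

lemma step (n α : ℕ) (A : Finset ℤ) (hα : α ≤ n) (hcard : A.card = n+1)
    (hdisj : A ∩ A.image (fun x => -x) = ∅)
    (a : ℤ) (haA : a ∈ A) (hapos : 0 < a) (hmax : ∀ x ∈ A, |x| ≤ a)
    (IH : ∀ A' : Finset ℤ, A'.card = n → A' ∩ A'.image (fun x => -x) = ∅ →
      n*(n+1) + 2 ≤ 2 * (sigmaAtLeast A' α).card + α*(α+1)) :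
    (n+1)*(n+2) + 2 ≤ 2 * (sigmaAtLeast A α).card + α*(α+1) := by
  have hnegA : ∀ x ∈ A, -x ∉ A := by
    intro x hx hnx
    have : -x ∈ A ∩ A.image (fun x => -x) :=
      Finset.mem_inter.mpr ⟨hnx, Finset.mem_image.mpr ⟨x, hx, rfl⟩⟩
    simp [hdisj] at this
  have h0A : (0:ℤ) ∉ A := fun h => hnegA 0 h (by simpa using h)
  have hA'sub : A.erase a ⊆ A := Finset.erase_subset _ _
  have hA'card : (A.erase a).card = n := by
    rw [Finset.card_erase_of_mem haA, hcard]
    omega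

  have hdisj' : (A.erase a) ∩ (A.erase a).image (fun x => -x) = ∅ := by
    have h := Finset.inter_subset_inter hA'sub (Finset.image_subset_image (f := fun x : ℤ => -x) hA'sub)
    rw [hdisj] at h
    exact Finset.subset_empty.mp h
  have hane : a ∉ A.erase a := Finset.notMem_erase _ _
  have hSigne : (sigmaAtLeast (A.erase a) α).Nonempty :=
    ⟨(A.erase a).sum id, mem_sigmaAtLeast subset_rfl (hA'card ▸ hα)⟩
  set M := (sigmaAtLeast (A.erase a) α).max' hSigne with hM
  obtain ⟨S, hS, hSsum⟩ := Finset.mem_image.mp ((sigmaAtLeast (A.erase a) α).max'_mem hSigne)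
  rw [Finset.mem_filter, Finset.mem_powerset] at hS
  obtain ⟨hSA', hSα⟩ := hS
  rw [← hM] at hSsum
  have hSA : S ⊆ A := hSA'.trans hA'sub
  have haS : a ∉ S := fun h => hane (hSA' h)
  set D : Finset ℤ := insert 0 ((S.image (fun x => -x)) ∪ ((A.erase a) \ S)) with hD
  have hdisjD : Disjoint (S.image (fun x => -x)) ((A.erase a) \ S) := by
    rw [Finset.disjoint_left]
    rintro x hx1 hx2
    obtain ⟨s, hsS, rfl⟩ := Finset.mem_image.mp hx1
    exact hnegA s (hSA hsS) (hA'sub (Finset.mem_sdiff.mp hx2).1)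
  have h0D : (0:ℤ) ∉ (S.image (fun x => -x)) ∪ ((A.erase a) \ S) := by
    intro h
    rcases Finset.mem_union.mp h with h | h
    · obtain ⟨s, hsS, hs0⟩ := Finset.mem_image.mp h
      have hs : s = 0 := by linarith [neg_eq_zero.mp hs0]
      exact h0A (hs ▸ hSA hsS)
    · exact h0A (hA'sub (Finset.mem_sdiff.mp h).1)
  have hScard_le : S.card ≤ n := hA'card ▸ Finset.card_le_card hSA'
  have hDcard : D.card = n + 1 := by
    rw [hD, Finset.card_insert_of_notMem h0D, Finset.card_union_of_disjoint hdisjD,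
      Finset.card_image_of_injective _ neg_injective, Finset.card_sdiff_of_subset hSA', hA'card]
    omega
  -- every M + a + t for t ∈ D is a valid sum
  have hNsub : ∀ t ∈ D, M + a + t ∈ sigmaAtLeast A α := by
    intro t ht
    rw [hD, Finset.mem_insert] at ht
    rcases ht with rfl | ht
    · have h1 : insert a S ⊆ A := Finset.insert_subset haA hSA
      have h2 : α ≤ (insert a S).card :=
        le_trans hSα (Finset.card_le_card (Finset.subset_insert _ _))
      have h3 : (insert a S).sum id = M + a + 0 := by
        rw [Finset.sum_insert haS, hSsum]; simp [id]; ring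
      exact h3 ▸ mem_sigmaAtLeast h1 h2
    rcases Finset.mem_union.mp ht with ht | ht
    · obtain ⟨s, hsS, rfl⟩ := Finset.mem_image.mp ht
      have haS' : a ∉ S.erase s := fun h => haS (Finset.erase_subset _ _ h)
      have h1 : insert a (S.erase s) ⊆ A :=
        Finset.insert_subset haA ((Finset.erase_subset _ _).trans hSA)
      have h2 : α ≤ (insert a (S.erase s)).card := by
        rw [Finset.card_insert_of_notMem haS', Finset.card_erase_of_mem hsS]
        have : 1 ≤ S.card := Finset.card_pos.mpr ⟨s, hsS⟩
        omega
      have h3 : (insert a (S.erase s)).sum id = M + a + (-s) := by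
        have he : (S.erase s).sum id + id s = S.sum id := Finset.sum_erase_add S id hsS
        rw [Finset.sum_insert haS']
        simp only [id] at he ⊢
        have hs2 : ∑ x ∈ S, x = M := by simpa using hSsum
        rw [hs2] at he
        linarith
      exact h3 ▸ mem_sigmaAtLeast h1 h2
    · obtain ⟨hyA', hyS⟩ := Finset.mem_sdiff.mp ht
      have hay : a ≠ t := fun h => hane (h ▸ hyA')
      have haS' : a ∉ insert t S := by
        intro h
        rcases Finset.mem_insert.mp h with h | h
        · exact hay h
        · exact haS h
      have h1 : insert a (insert t S) ⊆ A :=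
        Finset.insert_subset haA (Finset.insert_subset (hA'sub hyA') hSA)
      have h2 : α ≤ (insert a (insert t S)).card :=
        le_trans hSα (Finset.card_le_card ((Finset.subset_insert _ _).trans (Finset.subset_insert _ _)))
      have h3 : (insert a (insert t S)).sum id = M + a + t := by
        rw [Finset.sum_insert haS', Finset.sum_insert hyS, hSsum]
        simp only [id]; ring
      exact h3 ▸ mem_sigmaAtLeast h1 h2
  have hNgt : ∀ t ∈ D, M < M + a + t := by
    intro t ht
    rw [hD, Finset.mem_insert] at ht
    have key : -a < t := by
      rcases ht with rfl | ht
      · linarith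
      rcases Finset.mem_union.mp ht with ht | ht
      · obtain ⟨s, hsS, rfl⟩ := Finset.mem_image.mp ht
        have h1 : s ≤ a := (abs_le.mp (hmax s (hSA hsS))).2
        have h2 : s ≠ a := fun h => hane (h ▸ hSA' hsS)
        have : s < a := lt_of_le_of_ne h1 h2
        linarith
      · obtain ⟨hyA', hyS⟩ := Finset.mem_sdiff.mp ht
        have h1 : -a ≤ t := (abs_le.mp (hmax t (hA'sub hyA'))).1
        have h2 : -a ≠ t := by
          intro h
          exact hnegA t (hA'sub hyA') (by rw [← h]; simpa using haA)
        exact lt_of_le_of_ne h1 h2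
    linarith
  set N := D.image (fun t => M + a + t) with hN
  have hNcard : N.card = n + 1 := by
    rw [hN, Finset.card_image_of_injective _ (add_right_injective (M + a)), hDcard]
  have hNsub' : N ⊆ sigmaAtLeast A α := by
    intro s hs
    obtain ⟨t, ht, rfl⟩ := Finset.mem_image.mp hs
    exact hNsub t ht
  have hSigsub : sigmaAtLeast (A.erase a) α ⊆ sigmaAtLeast A α := by
    intro s hs
    obtain ⟨B, hB, rfl⟩ := Finset.mem_image.mp hs
    rw [Finset.mem_filter, Finset.mem_powerset] at hB
    exact mem_sigmaAtLeast (hB.1.trans hA'sub) hB.2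
  have hdisjN : Disjoint (sigmaAtLeast (A.erase a) α) N := by
    rw [Finset.disjoint_left]
    intro s hs hsN
    obtain ⟨t, ht, heq⟩ := Finset.mem_image.mp hsN
    have h1 : s ≤ M := Finset.le_max' _ s hs
    rw [← heq] at h1
    exact absurd h1 (not_le.mpr (hNgt t ht))
  have hcardle : (sigmaAtLeast (A.erase a) α).card + (n+1) ≤ (sigmaAtLeast A α).card := by
    calc (sigmaAtLeast (A.erase a) α).card + (n+1)
        = ((sigmaAtLeast (A.erase a) α) ∪ N).card := by
          rw [Finset.card_union_of_disjoint hdisjN, hNcard]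
      _ ≤ (sigmaAtLeast A α).card :=
          Finset.card_le_card (Finset.union_subset hSigsub hNsub')
  have hIH := IH (A.erase a) hA'card hdisj'
  have e : (n+1)*(n+2) = n*(n+1) + 2*(n+1) := by ring
  linarith

lemma key (k α : ℕ) (A : Finset ℤ) (hα : α ≤ k) (hcard : A.card = k)
    (hdisj : A ∩ A.image (fun x => -x) = ∅) :
    k*(k+1) + 2 ≤ 2 * (sigmaAtLeast A α).card + α*(α+1) := by
  induction k generalizing α A with
  | zero =>
    obtain rfl : α = 0 := Nat.le_zero.mp hα
    have h1 : 1 ≤ (sigmaAtLeast A 0).card :=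
      Finset.card_pos.mpr ⟨A.sum id, mem_sigmaAtLeast subset_rfl (Nat.zero_le _)⟩
    omega
  | succ n ih =>
    rcases eq_or_lt_of_le hα with heq | hαn
    · subst heq
      have h1 : 1 ≤ (sigmaAtLeast A (n+1)).card :=
        Finset.card_pos.mpr ⟨A.sum id, mem_sigmaAtLeast subset_rfl (le_of_eq hcard.symm)⟩
      linarith
    · have hα' : α ≤ n := Nat.lt_succ_iff.mp hαn
      have hAne : A.Nonempty := Finset.card_pos.mp (by omega)
      obtain ⟨b, hbA, hbmax⟩ := Finset.exists_max_image A (fun x => |x|) hAne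
      have hnegA : ∀ x ∈ A, -x ∉ A := by
        intro x hx hnx
        have : -x ∈ A ∩ A.image (fun x => -x) :=
          Finset.mem_inter.mpr ⟨hnx, Finset.mem_image.mpr ⟨x, hx, rfl⟩⟩
        simp [hdisj] at this
      have hb0 : b ≠ 0 := by
        intro h
        exact hnegA 0 (h ▸ hbA) (by simpa using (h ▸ hbA))
      rcases hb0.lt_or_gt with hbneg | hbpos
      · have hcard₂ : (A.image (fun x => -x)).card = n+1 := by
          rw [Finset.card_image_of_injective _ neg_injective, hcard]
        have hback : (A.image (fun x => -x)).image (fun x => -x) = A := by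
          rw [Finset.image_image]; simp
        have hdisj₂ : (A.image (fun x => -x)) ∩ (A.image (fun x => -x)).image (fun x => -x) = ∅ := by
          rw [hback, Finset.inter_comm]; exact hdisj
        have hmax₂ : ∀ x ∈ A.image (fun x => -x), |x| ≤ -b := by
          intro x hx
          obtain ⟨c, hc, rfl⟩ := Finset.mem_image.mp hx
          rw [abs_neg]
          calc |c| ≤ |b| := hbmax c hc
            _ = -b := abs_of_neg hbneg
        have h := step n α (A.image (fun x => -x)) hα' hcard₂ hdisj₂ (-b)
          (Finset.mem_image.mpr ⟨b, hbA, rfl⟩) (by linarith) hmax₂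
          (fun A' h1 h2 => ih α A' hα' h1 h2)
        rwa [sigma_neg, Finset.card_image_of_injective _ neg_injective] at h
      · exact step n α A hα' hcard hdisj b hbA hbpos
          (fun x hx => (abs_of_pos hbpos) ▸ hbmax x hx)
          (fun A' h1 h2 => ih α A' hα' h1 h2)

theorem stmt_0 (k α : ℕ) (A : Finset ℤ) (hcard : A.card = k)
    (hA : A ∩ A.image (fun x => -x) = ∅) (hα : α ≤ k) :
    ((sigmaAtLeast A α).card : ℤ) ≥
      (k : ℤ) * ((k : ℤ) + 1) / 2 - (α : ℤ) * ((α : ℤ) + 1) / 2 + 1 := by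
  have h := key k α A hα hcard hA
  have h2 : (k:ℤ)*((k:ℤ)+1) + 2 ≤ 2 * ((sigmaAtLeast A α).card : ℤ) + (α:ℤ)*((α:ℤ)+1) := by
    exact_mod_cast h
  obtain ⟨u, hu⟩ := Int.even_mul_succ_self (k:ℤ)
  obtain ⟨v, hv⟩ := Int.even_mul_succ_self (α:ℤ)
  rw [hu, hv] at h2 ⊢
  omega
end

section
/- For every k ≥ 1 and every integer α with 0 ≤ α ≤ k, the set A = {1, 2, …, k} satisfies A ∩ (−A) = ∅ and |Σ_α(A)| = k(k+1)/2 − α(α+1)/2 + 1; hence the lower bound |Σ_α(A)| ≥ k(k+1)/2 − α(α+1)/2 + 1 is optimal for sets with A ∩ (−A) = ∅. -/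
def T : ℕ → ℕ
  | 0 => 0
  | n+1 => T n + (n+1)

lemma T_succ (n : ℕ) : (T (n+1) : ℤ) = (T n : ℤ) + (n : ℤ) + 1 := by
  show ((T n + (n+1) : ℕ) : ℤ) = _
  push_cast; ring

lemma T_two (n : ℕ) : 2 * (T n : ℤ) = (n : ℤ) * ((n : ℤ) + 1) := by
  induction n with
  | zero => simp [T]
  | succ n ih => rw [T_succ]; push_cast; ring_nf; ring_nf at ih; linarith

lemma T_cast (n : ℕ) : (T n : ℤ) = (n : ℤ) * ((n : ℤ) + 1) / 2 := by
  have := T_two n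
  omega

lemma T_mono : Monotone T :=
  monotone_nat_of_le_succ (fun n => by simp [T])

lemma T_pred (k : ℕ) : (T k : ℤ) - (k : ℤ) = (T (k-1) : ℤ) := by
  cases k with
  | zero => simp
  | succ m => simp only [Nat.add_sub_cancel]; rw [T_succ]; push_cast; ring

lemma Icc_int_succ (a : ℤ) (b : ℤ) (h : a ≤ b + 1) :
    Finset.Icc a (b+1) = insert (b+1) (Finset.Icc a b) := by
  ext x; simp [Finset.mem_Icc]; omega

lemma sum_Icc_T (k : ℕ) : (Finset.Icc (1:ℤ) (k:ℤ)).sum id = T k := by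
  induction k with
  | zero => simp [T]
  | succ k ih =>
    rw [show ((k+1 : ℕ) : ℤ) = (k:ℤ) + 1 by push_cast; ring,
      Icc_int_succ 1 (k:ℤ) (by omega),
      Finset.sum_insert (by simp), T_succ, ih]
    simp only [id_eq]; ring

lemma card_Icc_int (a b : ℤ) (h : a ≤ b) : ((Finset.Icc a b).card : ℤ) = b - a + 1 := by
  rw [Int.card_Icc]; omega

lemma sum_lower (B : Finset ℤ) (hB : ∀ x ∈ B, 1 ≤ x) :
    (T B.card : ℤ) ≤ B.sum id := by
  induction B using Finset.strongInduction with
  | _ B ih =>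
    rcases B.eq_empty_or_nonempty with rfl | hne
    · simp [T]
    · set M := B.max' hne with hM
      have hMmem : M ∈ B := B.max'_mem hne
      have hsub : B ⊆ Finset.Icc 1 M := by
        intro x hx
        exact Finset.mem_Icc.mpr ⟨hB x hx, B.le_max' x hx⟩
      have hcard : (B.card : ℤ) ≤ M := by
        have hc := Finset.card_le_card hsub
        have h1 : 1 ≤ M := hB M hMmem
        have := card_Icc_int 1 M h1
        omega
      have herase : B.erase M ⊂ B := Finset.erase_ssubset hMmem
      have ihe := ih _ herase (fun x hx => hB x (Finset.mem_of_mem_erase hx))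
      have hce : (B.erase M).card = B.card - 1 := Finset.card_erase_of_mem hMmem
      have hsum : B.sum id = M + (B.erase M).sum id :=
        (Finset.add_sum_erase B id hMmem).symm
      have hpos : 1 ≤ B.card := Finset.card_pos.mpr hne
      obtain ⟨m, hm⟩ : ∃ m, B.card = m + 1 := ⟨B.card - 1, by omega⟩
      have hT : (T B.card : ℤ) = (T (B.card - 1) : ℤ) + B.card := by
        rw [hm, T_succ]; simp only [Nat.add_sub_cancel]; push_cast; ring
      rw [hce] at ihe
      omega

lemma exists_subset (k : ℕ) : ∀ α : ℕ, α ≤ k → ∀ n : ℤ, (T α : ℤ) ≤ n → n ≤ (T k : ℤ) →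
    ∃ B : Finset ℤ, B ⊆ Finset.Icc 1 (k:ℤ) ∧ α ≤ B.card ∧ B.sum id = n := by
  induction k with
  | zero =>
    intro α hα n h1 h2
    interval_cases α
    refine ⟨∅, by simp, by simp, ?_⟩
    simp [T] at h1 h2 ⊢
    omega
  | succ k ih =>
    intro α hα n h1 h2
    by_cases hn : n ≤ (T k : ℤ)
    · by_cases hαk : α ≤ k
      · obtain ⟨B, hB1, hB2, hB3⟩ := ih α hαk n h1 hn
        exact ⟨B, hB1.trans (Finset.Icc_subset_Icc le_rfl (by push_cast; omega)), hB2, hB3⟩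
      · have hαe : α = k + 1 := by omega
        subst hαe
        have := T_succ k
        omega
    · push_neg at hn
      have hT1 := T_succ k
      set n' : ℤ := n - ((k:ℤ)+1) with hn'
      have hpred := T_pred k
      have hlow : (T (α - 1) : ℤ) ≤ n' := by
        by_cases hαk : α ≤ k
        · have hm : T (α - 1) ≤ T (k - 1) := T_mono (by omega)
          have hm' : (T (α-1) : ℤ) ≤ (T (k-1) : ℤ) := by exact_mod_cast hm
          omega
        · have hαe : α = k + 1 := by omega
          subst hαe
          have h1' : (T (k+1) : ℤ) ≤ n := h1
          simp only [Nat.add_sub_cancel]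
          omega
      have hhigh : n' ≤ (T k : ℤ) := by omega
      obtain ⟨B, hB1, hB2, hB3⟩ := ih (α - 1) (by omega) n' hlow hhigh
      have hnotmem : ((k:ℤ)+1) ∉ B := by
        intro h
        have := Finset.mem_Icc.mp (hB1 h)
        omega
      refine ⟨insert ((k:ℤ)+1) B, ?_, ?_, ?_⟩
      · intro x hx
        rcases Finset.mem_insert.mp hx with rfl | hx
        · simp only [Finset.mem_Icc]; push_cast; omega
        · have := Finset.mem_Icc.mp (hB1 hx)
          simp only [Finset.mem_Icc]; push_cast; omega
      · rw [Finset.card_insert_of_notMem hnotmem]; omega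
      · rw [Finset.sum_insert hnotmem, hB3]; simp only [id_eq, hn']; ring

lemma sigma_eq (k α : ℕ) (hα : α ≤ k) :
    sigmaAtLeast (Finset.Icc (1:ℤ) (k:ℤ)) α = Finset.Icc (T α : ℤ) (T k : ℤ) := by
  ext n
  simp only [sigmaAtLeast, Finset.mem_image, Finset.mem_filter, Finset.mem_powerset,
    Finset.mem_Icc]
  constructor
  · rintro ⟨B, ⟨hsub, hcard⟩, rfl⟩
    constructor
    · have hpos : ∀ x ∈ B, (1:ℤ) ≤ x := fun x hx => (Finset.mem_Icc.mp (hsub hx)).1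
      have := sum_lower B hpos
      have hmono : (T α : ℤ) ≤ (T B.card : ℤ) := by exact_mod_cast T_mono hcard
      omega
    · calc B.sum id ≤ (Finset.Icc (1:ℤ) (k:ℤ)).sum id := by
            apply Finset.sum_le_sum_of_subset_of_nonneg hsub
            intro i hi _
            exact le_trans zero_le_one (Finset.mem_Icc.mp hi).1
        _ = (T k : ℤ) := sum_Icc_T k
  · rintro ⟨h1, h2⟩
    obtain ⟨B, hB1, hB2, hB3⟩ := exists_subset k α hα n h1 h2
    exact ⟨B, ⟨hB1, hB2⟩, hB3⟩

theorem stmt_1 (k α : ℕ) (hk : 1 ≤ k) (hα : α ≤ k) :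
    (Finset.Icc (1 : ℤ) (k : ℤ) ∩
        (Finset.Icc (1 : ℤ) (k : ℤ)).image (fun x => -x) = ∅) ∧
    ((sigmaAtLeast (Finset.Icc (1 : ℤ) (k : ℤ)) α).card : ℤ) =
      (k : ℤ) * ((k : ℤ) + 1) / 2 - (α : ℤ) * ((α : ℤ) + 1) / 2 + 1 := by
  constructor
  · ext x
    simp only [Finset.mem_inter, Finset.mem_image, Finset.mem_Icc, Finset.notMem_empty,
      iff_false]
    rintro ⟨⟨hx1, hx2⟩, y, ⟨hy1, hy2⟩, rfl⟩
    omega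
  · rw [sigma_eq k α hα]
    have hle : (T α : ℤ) ≤ (T k : ℤ) := by exact_mod_cast T_mono hα
    rw [card_Icc_int _ _ hle, T_cast, T_cast]
end

section
/- Let n and p be positive integers and let A be a finite set of integers consisting of exactly n negative integers and exactly p positive integers (and not containing 0). If α is an integer with 0 ≤ α ≤ n + p, α ≤ n, and α ≤ p, then |Σ_α(A)| ≥ n(n+1)/2 + p(p+1)/2 + 1. -/
/-- All subset sums of a finset. -/
def subsetSums (P : Finset ℤ) : Finset ℤ := P.powerset.image (fun B => B.sum id)

lemma zero_mem_subsetSums (P : Finset ℤ) : 0 ∈ subsetSums P :=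
  Finset.mem_image.2 ⟨∅, by simp, by simp⟩

lemma subsetSums_nonneg (P : Finset ℤ) (h : ∀ x ∈ P, 0 < x) :
    ∀ y ∈ subsetSums P, 0 ≤ y := by
  intro y hy
  obtain ⟨B, hB, rfl⟩ := Finset.mem_image.1 hy
  exact Finset.sum_nonneg fun i hi => (h i (Finset.mem_powerset.1 hB hi)).le

lemma subsetSums_nonpos (P : Finset ℤ) (h : ∀ x ∈ P, x < 0) :
    ∀ y ∈ subsetSums P, y ≤ 0 := by
  intro y hy
  obtain ⟨B, hB, rfl⟩ := Finset.mem_image.1 hy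
  exact Finset.sum_nonpos fun i hi => (h i (Finset.mem_powerset.1 hB hi)).le

lemma subsetSums_card_of_pos : ∀ (P : Finset ℤ), (∀ x ∈ P, 0 < x) →
    P.card * (P.card + 1) + 2 ≤ 2 * (subsetSums P).card := by
  intro P
  induction P using Finset.strongInduction with
  | _ P ih =>
    intro h
    rcases P.eq_empty_or_nonempty with rfl | hP
    · simp [subsetSums]
    · set b := P.max' hP with hbdef
      have hbP : b ∈ P := P.max'_mem hP
      set P' := P.erase b with hP'def
      have hss : P' ⊂ P := Finset.erase_ssubset hbP
      have ih' := ih P' hss (fun x hx => h x (Finset.mem_of_mem_erase hx))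
      have hS1 : subsetSums P' ⊆ subsetSums P :=
        Finset.image_subset_image (Finset.powerset_mono.2 (Finset.erase_subset _ _))
      set S2 : Finset ℤ := insert (P.sum id) (P'.image (fun x => P.sum id - x)) with hS2def
      have hS2sub : S2 ⊆ subsetSums P := by
        intro z hz
        rcases Finset.mem_insert.1 hz with rfl | hz
        · exact Finset.mem_image.2 ⟨P, Finset.mem_powerset.2 (le_refl P), rfl⟩
        · obtain ⟨x, hx, rfl⟩ := Finset.mem_image.1 hz
          refine Finset.mem_image.2 ⟨P.erase x,
            Finset.mem_powerset.2 (Finset.erase_subset _ _), ?_⟩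
          rw [Finset.sum_erase_eq_sub (Finset.mem_of_mem_erase hx)]
          rfl
      -- every element of subsetSums P' is ≤ P.sum id - b
      have hlow : ∀ y ∈ subsetSums P', y ≤ P.sum id - b := by
        intro y hy
        obtain ⟨B, hB, rfl⟩ := Finset.mem_image.1 hy
        have hBP' : B ⊆ P' := Finset.mem_powerset.1 hB
        have h1 : B.sum id ≤ P'.sum id :=
          Finset.sum_le_sum_of_subset_of_nonneg hBP'
            (fun i hi _ => (h i (Finset.mem_of_mem_erase hi)).le)
        have h2 : P'.sum id = P.sum id - b := by
          rw [hP'def, Finset.sum_erase_eq_sub hbP]; rfl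
        omega
      -- every element of S2 is > P.sum id - b
      have hhigh : ∀ z ∈ S2, P.sum id - b < z := by
        intro z hz
        rcases Finset.mem_insert.1 hz with rfl | hz
        · have := h b hbP; omega
        · obtain ⟨x, hx, rfl⟩ := Finset.mem_image.1 hz
          have hxb : x < b :=
            lt_of_le_of_ne (P.le_max' x (Finset.mem_of_mem_erase hx))
              (Finset.ne_of_mem_erase hx)
          omega
      have hdisj : Disjoint (subsetSums P') S2 := by
        rw [Finset.disjoint_left]
        intro a ha ha2
        have := hlow a ha
        have := hhigh a ha2
        omega
      have hcard2 : S2.card = P'.card + 1 := by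
        rw [hS2def, Finset.card_insert_of_notMem, Finset.card_image_of_injective _
          sub_right_injective]
        intro hmem
        obtain ⟨x, hx, hx2⟩ := Finset.mem_image.1 hmem
        have hx0 := h x (Finset.mem_of_mem_erase hx)
        omega
      have hunion : (subsetSums P').card + S2.card ≤ (subsetSums P).card := by
        rw [← Finset.card_union_of_disjoint hdisj]
        exact Finset.card_le_card (Finset.union_subset hS1 hS2sub)
      have hk : P.card = P'.card + 1 := by
        rw [hP'def, Finset.card_erase_of_mem hbP]
        have := Finset.card_pos.2 hP
        omega
      rw [hk]
      nlinarith [ih', hunion, hcard2]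

lemma subsetSums_card_of_neg : ∀ (P : Finset ℤ), (∀ x ∈ P, x < 0) →
    P.card * (P.card + 1) + 2 ≤ 2 * (subsetSums P).card := by
  intro P
  induction P using Finset.strongInduction with
  | _ P ih =>
    intro h
    rcases P.eq_empty_or_nonempty with rfl | hP
    · simp [subsetSums]
    · set b := P.min' hP with hbdef
      have hbP : b ∈ P := P.min'_mem hP
      set P' := P.erase b with hP'def
      have hss : P' ⊂ P := Finset.erase_ssubset hbP
      have ih' := ih P' hss (fun x hx => h x (Finset.mem_of_mem_erase hx))
      have hS1 : subsetSums P' ⊆ subsetSums P :=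
        Finset.image_subset_image (Finset.powerset_mono.2 (Finset.erase_subset _ _))
      set S2 : Finset ℤ := insert (P.sum id) (P'.image (fun x => P.sum id - x)) with hS2def
      have hS2sub : S2 ⊆ subsetSums P := by
        intro z hz
        rcases Finset.mem_insert.1 hz with rfl | hz
        · exact Finset.mem_image.2 ⟨P, Finset.mem_powerset.2 (le_refl P), rfl⟩
        · obtain ⟨x, hx, rfl⟩ := Finset.mem_image.1 hz
          refine Finset.mem_image.2 ⟨P.erase x,
            Finset.mem_powerset.2 (Finset.erase_subset _ _), ?_⟩
          rw [Finset.sum_erase_eq_sub (Finset.mem_of_mem_erase hx)]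
          rfl
      have hlow : ∀ y ∈ subsetSums P', P.sum id - b ≤ y := by
        intro y hy
        obtain ⟨B, hB, rfl⟩ := Finset.mem_image.1 hy
        have hBP' : B ⊆ P' := Finset.mem_powerset.1 hB
        have h1 : (P' \ B).sum id + B.sum id = P'.sum id := Finset.sum_sdiff hBP'
        have h3 : (P' \ B).sum id ≤ 0 :=
          Finset.sum_nonpos fun i hi =>
            (h i (Finset.mem_of_mem_erase (Finset.mem_sdiff.1 hi).1)).le
        have h2 : P'.sum id = P.sum id - b := by
          rw [hP'def, Finset.sum_erase_eq_sub hbP]; rfl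
        omega
      have hhigh : ∀ z ∈ S2, z < P.sum id - b := by
        intro z hz
        rcases Finset.mem_insert.1 hz with rfl | hz
        · have := h b hbP; omega
        · obtain ⟨x, hx, rfl⟩ := Finset.mem_image.1 hz
          have hxb : b < x :=
            lt_of_le_of_ne (P.min'_le x (Finset.mem_of_mem_erase hx))
              (Ne.symm (Finset.ne_of_mem_erase hx))
          omega
      have hdisj : Disjoint (subsetSums P') S2 := by
        rw [Finset.disjoint_left]
        intro a ha ha2
        have := hlow a ha
        have := hhigh a ha2
        omega
      have hcard2 : S2.card = P'.card + 1 := by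
        rw [hS2def, Finset.card_insert_of_notMem, Finset.card_image_of_injective _
          sub_right_injective]
        intro hmem
        obtain ⟨x, hx, hx2⟩ := Finset.mem_image.1 hmem
        have hx0 := h x (Finset.mem_of_mem_erase hx)
        omega
      have hunion : (subsetSums P').card + S2.card ≤ (subsetSums P).card := by
        rw [← Finset.card_union_of_disjoint hdisj]
        exact Finset.card_le_card (Finset.union_subset hS1 hS2sub)
      have hk : P.card = P'.card + 1 := by
        rw [hP'def, Finset.card_erase_of_mem hbP]
        have := Finset.card_pos.2 hP
        omega
      rw [hk]
      nlinarith [ih', hunion, hcard2]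

theorem stmt_3 (n p α : ℕ) (hn : 1 ≤ n) (hp : 1 ≤ p) (A : Finset ℤ)
    (hneg : (A.filter (fun x => x < 0)).card = n)
    (hpos : (A.filter (fun x => 0 < x)).card = p)
    (h0 : (0 : ℤ) ∉ A)
    (hα : α ≤ n + p) (hαn : α ≤ n) (hαp : α ≤ p) :
    ((sigmaAtLeast A α).card : ℤ) ≥
      (n : ℤ) * ((n : ℤ) + 1) / 2 + (p : ℤ) * ((p : ℤ) + 1) / 2 + 1 := by
  classical
  set neg := A.filter (fun x => x < 0) with hnegdef
  set pos := A.filter (fun x => 0 < x) with hposdef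
  have hnegP : ∀ x ∈ neg, x < 0 := fun x hx => (Finset.mem_filter.1 hx).2
  have hposP : ∀ x ∈ pos, 0 < x := fun x hx => (Finset.mem_filter.1 hx).2
  -- A.card = n + p
  have hfilt : A.filter (fun x => ¬ x < 0) = pos := by
    ext x
    simp only [Finset.mem_filter, hposdef]
    constructor
    · rintro ⟨hxA, hx⟩
      refine ⟨hxA, lt_of_le_of_ne (not_lt.1 hx) ?_⟩
      intro hx0
      exact h0 (hx0 ▸ hxA)
    · rintro ⟨hxA, hx⟩
      exact ⟨hxA, not_lt.2 hx.le⟩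
  have hAcard : A.card = n + p := by
    have h1 := Finset.card_filter_add_card_filter_not
      (s := A) (p := fun x => x < 0)
    rw [hfilt, ← hnegdef] at h1
    omega
  -- intersection of the two subset-sum sets is {0}
  have hinter : subsetSums neg ∩ subsetSums pos = {0} := by
    ext x
    simp only [Finset.mem_inter, Finset.mem_singleton]
    constructor
    · rintro ⟨h1, h2⟩
      have := subsetSums_nonpos neg hnegP x h1
      have := subsetSums_nonneg pos hposP x h2
      omega
    · rintro rfl
      exact ⟨zero_mem_subsetSums _, zero_mem_subsetSums _⟩
  set U : Finset ℤ := subsetSums neg ∪ subsetSums pos with hUdef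
  have hUcard : (subsetSums neg).card + (subsetSums pos).card = U.card + 1 := by
    have h2 := Finset.card_union_add_card_inter (subsetSums neg) (subsetSums pos)
    rw [hinter, ← hUdef] at h2
    simp only [Finset.card_singleton] at h2
    omega
  -- map x ↦ σ(A) - x sends U into sigmaAtLeast A α
  have himg : U.image (fun x => A.sum id - x) ⊆ sigmaAtLeast A α := by
    intro z hz
    obtain ⟨x, hx, rfl⟩ := Finset.mem_image.1 hz
    have key : ∀ B : Finset ℤ, B ⊆ A → B.card ≤ n + p - α →
        A.sum id - B.sum id ∈ sigmaAtLeast A α := by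
      intro B hBA hBcard
      refine Finset.mem_image.2 ⟨A \ B, Finset.mem_filter.2
        ⟨Finset.mem_powerset.2 (Finset.sdiff_subset), ?_⟩, ?_⟩
      · rw [Finset.card_sdiff_of_subset hBA]
        omega
      · rw [eq_sub_iff_add_eq]
        exact Finset.sum_sdiff hBA
    rcases Finset.mem_union.1 hx with hx | hx
    · obtain ⟨B, hB, rfl⟩ := Finset.mem_image.1 hx
      have hBneg : B ⊆ neg := Finset.mem_powerset.1 hB
      have hBcard : B.card ≤ n := hneg ▸ Finset.card_le_card hBneg
      exact key B (hBneg.trans (Finset.filter_subset _ _)) (by omega)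
    · obtain ⟨B, hB, rfl⟩ := Finset.mem_image.1 hx
      have hBpos : B ⊆ pos := Finset.mem_powerset.1 hB
      have hBcard : B.card ≤ p := hpos ▸ Finset.card_le_card hBpos
      exact key B (hBpos.trans (Finset.filter_subset _ _)) (by omega)
  have himgcard : (U.image (fun x => A.sum id - x)).card = U.card :=
    Finset.card_image_of_injective _ sub_right_injective
  have hmain : U.card ≤ (sigmaAtLeast A α).card := by
    rw [← himgcard]
    exact Finset.card_le_card himg
  -- numeric bookkeeping
  have hb1 := subsetSums_card_of_neg neg hnegP
  have hb2 := subsetSums_card_of_pos pos hposP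
  rw [hneg] at hb1
  rw [hpos] at hb2
  obtain ⟨mn, hmn⟩ := Nat.even_mul_succ_self n
  obtain ⟨mp, hmp⟩ := Nat.even_mul_succ_self p
  have hnat : n * (n + 1) / 2 + p * (p + 1) / 2 + 1 ≤ (sigmaAtLeast A α).card := by
    omega
  have hmn' : (n : ℤ) * ((n : ℤ) + 1) = 2 * (mn : ℤ) := by
    exact_mod_cast (by omega : n * (n + 1) = 2 * mn)
  have hmp' : (p : ℤ) * ((p : ℤ) + 1) = 2 * (mp : ℤ) := by
    exact_mod_cast (by omega : p * (p + 1) = 2 * mp)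
  have cast1 : ((n * (n + 1) / 2 : ℕ) : ℤ) = (n : ℤ) * ((n : ℤ) + 1) / 2 := by
    rw [(by omega : n * (n + 1) / 2 = mn), hmn',
      Int.mul_ediv_cancel_left _ (by norm_num)]
  have cast2 : ((p * (p + 1) / 2 : ℕ) : ℤ) = (p : ℤ) * ((p : ℤ) + 1) / 2 := by
    rw [(by omega : p * (p + 1) / 2 = mp), hmp',
      Int.mul_ediv_cancel_left _ (by norm_num)]
  rw [ge_iff_le, ← cast1, ← cast2]
  exact_mod_cast hnat
end

section
/- Let n and p be positive integers and let A be a finite set of integers consisting of exactly n negative integers and exactly p positive integers (and not containing 0). If α is an integer with 0 ≤ α ≤ n + p, α ≤ n, and α > p, then |Σ_α(A)| ≥ n(n+1)/2 + p(p+1)/2 − (α−p)(α−p+1)/2 + 1. -/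
/-- Sums of subsets of `B` of size at most `r`. -/
def sumsUpTo (B : Finset ℤ) (r : ℕ) : Finset ℤ :=
  (B.powerset.filter (fun C => C.card ≤ r)).image (fun C => C.sum id)

lemma mem_sumsUpTo {B : Finset ℤ} {r : ℕ} {s : ℤ} :
    s ∈ sumsUpTo B r ↔ ∃ C, C ⊆ B ∧ C.card ≤ r ∧ C.sum id = s := by
  simp only [sumsUpTo, Finset.mem_image, Finset.mem_filter, Finset.mem_powerset]
  tauto

lemma sumsUpTo_zero (B : Finset ℤ) : sumsUpTo B 0 = {0} := by
  ext s
  simp only [mem_sumsUpTo, Finset.mem_singleton, Nat.le_zero, Finset.card_eq_zero]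
  constructor
  · rintro ⟨C, -, rfl, rfl⟩; simp
  · rintro rfl; exact ⟨∅, by simp⟩

lemma sumsUpTo_mono (B : Finset ℤ) (r : ℕ) : sumsUpTo B r ⊆ sumsUpTo B (r + 1) := by
  intro s hs
  rw [mem_sumsUpTo] at hs ⊢
  obtain ⟨C, h1, h2, h3⟩ := hs
  exact ⟨C, h1, h2.trans (Nat.le_succ r), h3⟩

lemma step_pos (B : Finset ℤ) (hB : ∀ x ∈ B, 0 < x) (r : ℕ) (hr : r < B.card) :
    (sumsUpTo B r).card + (B.card - r) ≤ (sumsUpTo B (r + 1)).card := by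
  classical
  -- maximal-sum subset of size r
  have hFne : (B.powerset.filter (fun C => C.card = r)).Nonempty := by
    obtain ⟨W, hW1, hW2⟩ := Finset.exists_subset_card_eq (le_of_lt hr)
    exact ⟨W, by simp [Finset.mem_filter, Finset.mem_powerset, hW1, hW2]⟩
  obtain ⟨W, hWF, hWmax⟩ :=
    Finset.exists_max_image (B.powerset.filter (fun C => C.card = r)) (fun C => C.sum id) hFne
  rw [Finset.mem_filter, Finset.mem_powerset] at hWF
  obtain ⟨hWB, hWcard⟩ := hWF
  -- every element of sumsUpTo B r is at most W.sum id
  have hub : ∀ s ∈ sumsUpTo B r, s ≤ W.sum id := by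
    intro s hs
    rw [mem_sumsUpTo] at hs
    obtain ⟨C, hCB, hCc, rfl⟩ := hs
    obtain ⟨C', hCC', hC'B, hC'c⟩ := Finset.exists_subsuperset_card_eq hCB hCc (le_of_lt hr)
    have h1 : C.sum id ≤ C'.sum id :=
      Finset.sum_le_sum_of_subset_of_nonneg hCC' (fun x hx _ => le_of_lt (hB x (hC'B hx)))
    have h2 : C'.sum id ≤ W.sum id := by
      refine hWmax C' ?_
      simp [Finset.mem_filter, Finset.mem_powerset, hC'B, hC'c]
    exact h1.trans h2
  set newS : Finset ℤ := (B \ W).image (fun x => W.sum id + x) with hnewS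
  have hnew_sub : newS ⊆ sumsUpTo B (r + 1) := by
    intro s hs
    rw [hnewS, Finset.mem_image] at hs
    obtain ⟨x, hx, rfl⟩ := hs
    rw [Finset.mem_sdiff] at hx
    rw [mem_sumsUpTo]
    refine ⟨insert x W, ?_, ?_, ?_⟩
    · exact Finset.insert_subset hx.1 hWB
    · rw [Finset.card_insert_of_notMem hx.2, hWcard]
    · rw [Finset.sum_insert hx.2]; simp [add_comm]
  have hdisj : Disjoint (sumsUpTo B r) newS := by
    rw [Finset.disjoint_left]
    intro s hs hs'
    rw [hnewS, Finset.mem_image] at hs'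
    obtain ⟨x, hx, rfl⟩ := hs'
    rw [Finset.mem_sdiff] at hx
    have hxpos := hB x hx.1
    have := hub _ hs
    omega
  have hcardnew : newS.card = B.card - r := by
    rw [hnewS, Finset.card_image_of_injective _ (add_right_injective _),
      Finset.card_sdiff_of_subset hWB, hWcard]
  have hunion : sumsUpTo B r ∪ newS ⊆ sumsUpTo B (r + 1) :=
    Finset.union_subset (sumsUpTo_mono B r) hnew_sub
  calc (sumsUpTo B r).card + (B.card - r)
      = (sumsUpTo B r ∪ newS).card := by
        rw [Finset.card_union_of_disjoint hdisj, hcardnew]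
    _ ≤ (sumsUpTo B (r + 1)).card := Finset.card_le_card hunion

lemma step_neg (B : Finset ℤ) (hB : ∀ x ∈ B, x < 0) (r : ℕ) (hr : r < B.card) :
    (sumsUpTo B r).card + (B.card - r) ≤ (sumsUpTo B (r + 1)).card := by
  classical
  have hFne : (B.powerset.filter (fun C => C.card = r)).Nonempty := by
    obtain ⟨W, hW1, hW2⟩ := Finset.exists_subset_card_eq (le_of_lt hr)
    exact ⟨W, by simp [Finset.mem_filter, Finset.mem_powerset, hW1, hW2]⟩
  obtain ⟨W, hWF, hWmin⟩ :=
    Finset.exists_min_image (B.powerset.filter (fun C => C.card = r)) (fun C => C.sum id) hFne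
  rw [Finset.mem_filter, Finset.mem_powerset] at hWF
  obtain ⟨hWB, hWcard⟩ := hWF
  have hub : ∀ s ∈ sumsUpTo B r, W.sum id ≤ s := by
    intro s hs
    rw [mem_sumsUpTo] at hs
    obtain ⟨C, hCB, hCc, rfl⟩ := hs
    obtain ⟨C', hCC', hC'B, hC'c⟩ := Finset.exists_subsuperset_card_eq hCB hCc (le_of_lt hr)
    have h1 : C'.sum id ≤ C.sum id := by
      have := Finset.sum_le_sum_of_subset_of_nonneg (f := fun x => -(id x)) hCC'
        (fun x hx _ => by simpa using le_of_lt (hB x (hC'B hx)))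
      simp only [Finset.sum_neg_distrib] at this
      linarith
    have h2 : W.sum id ≤ C'.sum id := by
      refine hWmin C' ?_
      simp [Finset.mem_filter, Finset.mem_powerset, hC'B, hC'c]
    exact h2.trans h1
  set newS : Finset ℤ := (B \ W).image (fun x => W.sum id + x) with hnewS
  have hnew_sub : newS ⊆ sumsUpTo B (r + 1) := by
    intro s hs
    rw [hnewS, Finset.mem_image] at hs
    obtain ⟨x, hx, rfl⟩ := hs
    rw [Finset.mem_sdiff] at hx
    rw [mem_sumsUpTo]
    refine ⟨insert x W, ?_, ?_, ?_⟩
    · exact Finset.insert_subset hx.1 hWB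
    · rw [Finset.card_insert_of_notMem hx.2, hWcard]
    · rw [Finset.sum_insert hx.2]; simp [add_comm]
  have hdisj : Disjoint (sumsUpTo B r) newS := by
    rw [Finset.disjoint_left]
    intro s hs hs'
    rw [hnewS, Finset.mem_image] at hs'
    obtain ⟨x, hx, rfl⟩ := hs'
    rw [Finset.mem_sdiff] at hx
    have hxneg := hB x hx.1
    have := hub _ hs
    omega
  have hcardnew : newS.card = B.card - r := by
    rw [hnewS, Finset.card_image_of_injective _ (add_right_injective _),
      Finset.card_sdiff_of_subset hWB, hWcard]
  have hunion : sumsUpTo B r ∪ newS ⊆ sumsUpTo B (r + 1) :=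
    Finset.union_subset (sumsUpTo_mono B r) hnew_sub
  calc (sumsUpTo B r).card + (B.card - r)
      = (sumsUpTo B r ∪ newS).card := by
        rw [Finset.card_union_of_disjoint hdisj, hcardnew]
    _ ≤ (sumsUpTo B (r + 1)).card := Finset.card_le_card hunion

/-- Core counting lemma, stated to keep arithmetic linear:
if `r + d = B.card` then `m*(m+1) + 2 ≤ 2*|Σ_{≤r}(B)| + d*(d+1)`. -/
lemma core (B : Finset ℤ)
    (hstep : ∀ r, r < B.card →
      (sumsUpTo B r).card + (B.card - r) ≤ (sumsUpTo B (r + 1)).card) :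
    ∀ r d, r + d = B.card →
      B.card * (B.card + 1) + 2 ≤ 2 * (sumsUpTo B r).card + d * (d + 1) := by
  intro r
  induction r with
  | zero =>
    intro d hd
    rw [sumsUpTo_zero]
    simp only [Finset.card_singleton]
    have : d = B.card := by omega
    subst this
    linarith
  | succ r ih =>
    intro d hd
    have hr : r < B.card := by omega
    have h1 := ih (d + 1) (by omega)
    have h2 := hstep r hr
    have h3 : B.card - r = d + 1 := by omega
    rw [h3] at h2
    have hexp : (d + 1) * (d + 1 + 1) = d * (d + 1) + 2 * (d + 1) := by ring
    linarith

theorem stmt_4 (n p α : ℕ) (hn : 1 ≤ n) (hp : 1 ≤ p) (A : Finset ℤ)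
    (hneg : (A.filter (fun x => x < 0)).card = n)
    (hpos : (A.filter (fun x => 0 < x)).card = p)
    (h0 : (0 : ℤ) ∉ A)
    (hα : α ≤ n + p) (hαn : α ≤ n) (hαp : p < α) :
    ((sigmaAtLeast A α).card : ℤ) ≥
      (n : ℤ) * ((n : ℤ) + 1) / 2 + (p : ℤ) * ((p : ℤ) + 1) / 2
        - ((α : ℤ) - (p : ℤ)) * ((α : ℤ) - (p : ℤ) + 1) / 2 + 1 := by
  classical
  set N : Finset ℤ := A.filter (fun x => x < 0) with hN
  set P : Finset ℤ := A.filter (fun x => 0 < x) with hP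
  have hNneg : ∀ x ∈ N, x < 0 := fun x hx => (Finset.mem_filter.mp hx).2
  have hPpos : ∀ x ∈ P, 0 < x := fun x hx => (Finset.mem_filter.mp hx).2
  have hNA : N ⊆ A := Finset.filter_subset _ _
  have hPA : P ⊆ A := Finset.filter_subset _ _
  have hNPdisj : Disjoint N P := by
    rw [Finset.disjoint_left]
    intro x hx hx'
    have := hNneg x hx; have := hPpos x hx'; omega
  have hA_eq : A = N ∪ P := by
    ext x
    simp only [hN, hP, Finset.mem_union, Finset.mem_filter]
    constructor
    · intro hx
      rcases lt_trichotomy x 0 with h | h | h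
      · exact Or.inl ⟨hx, h⟩
      · exact absurd (h ▸ hx) h0
      · exact Or.inr ⟨hx, h⟩
    · rintro (⟨hx, -⟩ | ⟨hx, -⟩) <;> exact hx
  have hAcard : A.card = n + p := by
    rw [hA_eq, Finset.card_union_of_disjoint hNPdisj, hneg, hpos]
  have hsumA : A.sum id = N.sum id + P.sum id := by
    rw [hA_eq, Finset.sum_union hNPdisj]
  set k : ℕ := α - p with hk
  have hkn : k ≤ n := by omega
  -- Part 1 : N plus subsets of P
  set S1 : Finset ℤ := (sumsUpTo P p).image (fun s => N.sum id + s) with hS1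
  -- Part 2 : A minus subsets of N of size at most n - k
  set S2 : Finset ℤ := (sumsUpTo N (n - k)).image (fun s => A.sum id - s) with hS2
  have hS1sub : S1 ⊆ sigmaAtLeast A α := by
    intro y hy
    rw [hS1, Finset.mem_image] at hy
    obtain ⟨s, hs, rfl⟩ := hy
    rw [mem_sumsUpTo] at hs
    obtain ⟨C, hCP, hCc, rfl⟩ := hs
    rw [sigmaAtLeast, Finset.mem_image]
    refine ⟨N ∪ C, ?_, ?_⟩
    · rw [Finset.mem_filter, Finset.mem_powerset]
      constructor
      · exact Finset.union_subset hNA (hCP.trans hPA)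
      · calc α ≤ n := hαn
          _ = N.card := hneg.symm
          _ ≤ (N ∪ C).card := Finset.card_le_card Finset.subset_union_left
    · rw [Finset.sum_union (Finset.disjoint_of_subset_right hCP hNPdisj)]
  have hS2sub : S2 ⊆ sigmaAtLeast A α := by
    intro y hy
    rw [hS2, Finset.mem_image] at hy
    obtain ⟨s, hs, rfl⟩ := hy
    rw [mem_sumsUpTo] at hs
    obtain ⟨U, hUN, hUc, rfl⟩ := hs
    rw [sigmaAtLeast, Finset.mem_image]
    have hUA : U ⊆ A := hUN.trans hNA
    refine ⟨A \ U, ?_, ?_⟩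
    · rw [Finset.mem_filter, Finset.mem_powerset]
      refine ⟨Finset.sdiff_subset, ?_⟩
      rw [Finset.card_sdiff_of_subset hUA, hAcard]
      omega
    · have := Finset.sum_sdiff (f := id) hUA
      linarith
  -- cardinality bounds
  have hcard1 : p * (p + 1) + 2 ≤ 2 * (sumsUpTo P p).card := by
    have hPc : P.card = p := hpos
    have := core P (step_pos P hPpos) p 0 (by omega)
    rw [hPc] at this
    simpa using this
  have hcard2 : n * (n + 1) + 2 ≤ 2 * (sumsUpTo N (n - k)).card + k * (k + 1) := by
    have hNc : N.card = n := hneg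
    have := core N (step_neg N hNneg) (n - k) k (by omega)
    rw [hNc] at this
    exact this
  have hcS1 : S1.card = (sumsUpTo P p).card := by
    rw [hS1]; exact Finset.card_image_of_injective _ (add_right_injective _)
  have hcS2 : S2.card = (sumsUpTo N (n - k)).card := by
    rw [hS2]
    refine Finset.card_image_of_injective _ ?_
    intro a b hab
    simpa using hab
  -- the two parts only overlap at A.sum id
  have hinter : S1 ∩ S2 ⊆ {A.sum id} := by
    intro y hy
    rw [Finset.mem_inter] at hy
    obtain ⟨hy1, hy2⟩ := hy
    rw [hS1, Finset.mem_image] at hy1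
    obtain ⟨s, hs, hys⟩ := hy1
    rw [mem_sumsUpTo] at hs
    obtain ⟨C, hCP, -, rfl⟩ := hs
    rw [hS2, Finset.mem_image] at hy2
    obtain ⟨t, ht, hyt⟩ := hy2
    rw [mem_sumsUpTo] at ht
    obtain ⟨U, hUN, -, rfl⟩ := ht
    have h1 : C.sum id ≤ P.sum id :=
      Finset.sum_le_sum_of_subset_of_nonneg hCP (fun x hx _ => le_of_lt (hPpos x hx))
    have h2 : U.sum id ≤ 0 :=
      Finset.sum_nonpos (fun x hx => le_of_lt (hNneg x (hUN hx)))
    rw [Finset.mem_singleton]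
    omega
  have hintercard : (S1 ∩ S2).card ≤ 1 := by
    calc (S1 ∩ S2).card ≤ ({A.sum id} : Finset ℤ).card := Finset.card_le_card hinter
      _ = 1 := Finset.card_singleton _
  have hunioncard : S1.card + S2.card ≤ (sigmaAtLeast A α).card + 1 := by
    have h1 : (S1 ∪ S2).card + (S1 ∩ S2).card = S1.card + S2.card :=
      Finset.card_union_add_card_inter S1 S2
    have h2 : (S1 ∪ S2).card ≤ (sigmaAtLeast A α).card :=
      Finset.card_le_card (Finset.union_subset hS1sub hS2sub)
    omega
  -- final arithmetic
  have hmain : n * (n + 1) + p * (p + 1) + 2 ≤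
      2 * (sigmaAtLeast A α).card + k * (k + 1) := by omega
  have hkz : ((k : ℕ) : ℤ) = (α : ℤ) - (p : ℤ) := by
    rw [hk]; push_cast [Nat.cast_sub (le_of_lt hαp)]; ring
  rw [← hkz]
  have hmainz : (n : ℤ) * ((n : ℤ) + 1) + (p : ℤ) * ((p : ℤ) + 1) + 2 ≤
      2 * ((sigmaAtLeast A α).card : ℤ) + (k : ℤ) * ((k : ℤ) + 1) := by
    exact_mod_cast hmain
  have d1 : (2 : ℤ) ∣ (n : ℤ) * ((n : ℤ) + 1) := (Int.even_mul_succ_self _).two_dvd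
  have d2 : (2 : ℤ) ∣ (p : ℤ) * ((p : ℤ) + 1) := (Int.even_mul_succ_self _).two_dvd
  have d3 : (2 : ℤ) ∣ (k : ℤ) * ((k : ℤ) + 1) := (Int.even_mul_succ_self _).two_dvd
  generalize (n : ℤ) * ((n : ℤ) + 1) = a at hmainz d1
  generalize (p : ℤ) * ((p : ℤ) + 1) = b at hmainz d2
  generalize (k : ℤ) * ((k : ℤ) + 1) = c at hmainz d3
  omega
end

section
/- Let n and p be positive integers and let A be a finite set of integers consisting of exactly n negative integers and exactly p positive integers (and not containing 0). If α is an integer with 0 ≤ α ≤ n + p, α > n, and α > p, then |Σ_α(A)| ≥ n(n+1)/2 + p(p+1)/2 − (α−n)(α−n+1)/2 − (α−p)(α−p+1)/2 + 1. -/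
namespace SigmaAux

def dsum (c : List ℤ) : List ℤ := c.reverse.map (fun x => c.sum - x)

lemma dsum_length (c : List ℤ) : (dsum c).length = c.length := by simp [dsum]

lemma dsum_ne_nil {c : List ℤ} (h : c ≠ []) : dsum c ≠ [] := by
  simp [dsum, h]

lemma dsum_chain {c : List ℤ} (hc : c.Pairwise (· < ·)) : (dsum c).Chain' (· < ·) := by
  rw [dsum, List.map_reverse]; refine List.isChain_reverse.mpr ?_
  exact (List.isChain_map _).mpr ((List.isChain_iff_pairwise.mpr hc).imp (fun a b hab => by simp [flip]; omega))

lemma dsum_head? {c : List ℤ} (h : c ≠ []) : (dsum c).head? = some c.dropLast.sum := by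
  rcases c.eq_nil_or_concat with rfl | ⟨t, a, rfl⟩
  · contradiction
  simp [dsum, List.sum_append]

lemma dsum_getLast? {c : List ℤ} (h : c ≠ []) : (dsum c).getLast? = some c.tail.sum := by
  obtain ⟨a, t, rfl⟩ : ∃ a t, c = a :: t := by
    cases c with
    | nil => exact absurd rfl h
    | cons a t => exact ⟨a, t, rfl⟩
  rw [dsum]
  rw [show (a :: t).reverse.map (fun x => (a :: t).sum - x)
      = ((a :: t).map (fun x => (a :: t).sum - x)).reverse by simp]
  rw [List.getLast?_reverse]
  simp

lemma glue {l₁ l₂ : List ℤ} (h₁ : l₁.Chain' (· < ·)) (h₂ : l₂.Chain' (· < ·))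
    (hne : l₁ ≠ []) (hh : l₂.head? = l₁.getLast?) :
    (l₁.dropLast ++ l₂).Chain' (· < ·) ∧ (l₁.dropLast ++ l₂).head? = l₁.head? ∧
    (l₁.dropLast ++ l₂).getLast? = l₂.getLast? ∧
    (l₁.dropLast ++ l₂).length + 1 = l₁.length + l₂.length := by
  have hne₂ : l₂ ≠ [] := by
    intro h; rw [h] at hh; simp at hh; exact hne (List.getLast?_eq_none_iff.mp hh.symm)
  have hd := List.dropLast_append_getLast hne
  have h₁' := h₁
  rw [← hd] at h₁'
  obtain ⟨ha, -, hg⟩ := List.isChain_append.mp h₁'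
  refine ⟨?_, ?_, ?_, ?_⟩
  · refine ha.append h₂ ?_
    intro x hx y hy
    rw [hh, List.getLast?_eq_getLast hne] at hy
    simp at hy
    subst hy
    exact hg x hx _ (by simp)
  · cases hdl : l₁.dropLast with
    | nil =>
      rw [← hd, hdl]
      simp only [List.nil_append, hh, List.getLast?_eq_getLast hne]
      simp
    | cons a t =>
      rw [← hd, hdl]
      simp
  · rw [List.getLast?_append_of_ne_nil _ hne₂]
  · have : 1 ≤ l₁.length := List.length_pos_iff.mpr hne
    simp [List.length_dropLast]
    omega

lemma erase_witness {c : List ℤ} (hc : c.Pairwise (· < ·)) {y : ℤ} (hy : y ∈ c) :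
    (c.toFinset.erase y).card + 1 = c.length ∧ (c.toFinset.erase y).sum id = c.sum - y := by
  have hnd : c.Nodup := hc.nodup
  constructor
  · rw [Finset.card_erase_of_mem (List.mem_toFinset.mpr hy), List.toFinset_card_of_nodup hnd]
    have : 1 ≤ c.length := List.length_pos_iff.mpr (List.ne_nil_of_mem hy)
    omega
  · rw [Finset.sum_erase_eq_sub (List.mem_toFinset.mpr hy), List.sum_toFinset _ hnd]
    simp

lemma key_zero (la lb : List ℤ) :
    ∃ L : List ℤ,
      L.length = 0 * (la.length + lb.length - 0 + 1) + 1 ∧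
      L.Chain' (· < ·) ∧
      (∀ x ∈ L, ∃ B : Finset ℤ, B ⊆ la.toFinset ∪ lb.toFinset ∧ B.card ≤ 0 ∧ B.sum id = x) ∧
      L.head? = some (la.take 0).sum ∧
      L.getLast? = some (lb.drop (lb.length - 0)).sum := by
  refine ⟨[0], by simp, List.isChain_singleton _, ?_, by simp, by simp [List.drop_length]⟩
  intro x hx
  simp at hx
  exact ⟨∅, by simp, by simp, by simp [hx]⟩

lemma key : ∀ (m : ℕ) (la lb : List ℤ) (s : ℕ),
    la.length + lb.length ≤ m →
    la.Pairwise (· < ·) → lb.Pairwise (· < ·) →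
    (∀ x ∈ la, x < 0) → (∀ x ∈ lb, 0 < x) →
    s ≤ la.length → s ≤ lb.length →
    ∃ L : List ℤ,
      L.length = s * (la.length + lb.length - s + 1) + 1 ∧
      L.Chain' (· < ·) ∧
      (∀ x ∈ L, ∃ B : Finset ℤ, B ⊆ la.toFinset ∪ lb.toFinset ∧ B.card ≤ s ∧ B.sum id = x) ∧
      L.head? = some (la.take s).sum ∧
      L.getLast? = some (lb.drop (lb.length - s)).sum := by
  intro m
  induction m with
  | zero =>
    intro la lb s hm hla hlb hna hnb hsa hsb
    obtain rfl : s = 0 := by omega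
    exact key_zero la lb
  | succ m ih =>
    intro la lb s hm hla hlb hna hnb hsa hsb
    rcases Nat.eq_zero_or_pos s with rfl | hs1
    · exact key_zero la lb
    by_cases hA : s < la.length
    · -- Case A : strip the smallest negative
      rcases la with _ | ⟨a, la'⟩
      · simp at hA
      have hla' : la'.Pairwise (· < ·) := hla.of_cons
      obtain ⟨L', h1, h2, h3, h4, h5⟩ := ih la' lb s
        (by simp at hm ⊢; omega) hla' hlb
        (fun x hx => hna x (List.mem_cons_of_mem _ hx)) hnb
        (by simp at hA; omega) hsb
      set c : List ℤ := (a :: la').take (s+1) with hc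
      have hcs : c.Pairwise (· < ·) := List.Pairwise.sublist (List.take_sublist _ _) hla
      have hclen : c.length = s + 1 := by
        rw [hc, List.length_take]
        simp at hA ⊢
        omega
      have hcne : c ≠ [] := by
        intro h; rw [h] at hclen; simp at hclen
      have hctail : c.tail = la'.take s := by simp [hc]
      have hcdrop : c.dropLast = (a :: la').take s := by
        rw [List.dropLast_eq_take, hclen, Nat.add_sub_cancel, hc, List.take_take]
        congr 1
        omega
      have hgl := glue (dsum_chain hcs) h2 (dsum_ne_nil hcne)
        (by rw [h4, dsum_getLast? hcne, hctail])
      refine ⟨(dsum c).dropLast ++ L', ?_, hgl.1, ?_, ?_, ?_⟩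
      · have hlen := hgl.2.2.2
        rw [dsum_length, hclen, h1] at hlen
        have e1 : la'.length + lb.length - s + 1 + 1 = (a :: la').length + lb.length - s + 1 := by
          simp
          omega
        rw [← e1]
        have e2 : s * (la'.length + lb.length - s + 1 + 1)
            = s * (la'.length + lb.length - s + 1) + s := by ring
        rw [e2]
        linarith [hlen]
      · intro x hx
        rcases List.mem_append.mp hx with hx | hx
        · have hx' : x ∈ dsum c := List.mem_of_mem_dropLast hx
          obtain ⟨y, hy, rfl⟩ : ∃ y ∈ c, c.sum - y = x := by
            simp only [dsum, List.mem_map, List.mem_reverse] at hx'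
            exact hx'
          refine ⟨c.toFinset.erase y, ?_, ?_, (erase_witness hcs hy).2⟩
          · intro z hz
            have hz1 : z ∈ c.toFinset := Finset.mem_of_mem_erase hz
            rw [List.mem_toFinset] at hz1
            have hz2 : z ∈ a :: la' := (List.take_sublist _ _).subset hz1
            rw [Finset.mem_union]
            exact Or.inl (List.mem_toFinset.mpr hz2)
          · have := (erase_witness hcs hy).1
            omega
        · obtain ⟨B, hB1, hB2, hB3⟩ := h3 x hx
          refine ⟨B, ?_, hB2, hB3⟩
          intro z hz
          have hz1 := hB1 hz
          rw [Finset.mem_union] at hz1 ⊢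
          rcases hz1 with h | h
          · exact Or.inl (List.mem_toFinset.mpr (List.mem_cons_of_mem _ (List.mem_toFinset.mp h)))
          · exact Or.inr h
      · rw [hgl.2.1, dsum_head? hcne, hcdrop]
      · rw [hgl.2.2.1, h5]
    · by_cases hB : s < lb.length
      · -- Case B : strip the largest positive
        have hlas : la.length = s := by omega
        obtain ⟨L', h1, h2, h3, h4, h5⟩ := ih la lb.dropLast s
          (by rw [List.length_dropLast]; omega) hla
          (List.Pairwise.sublist (List.dropLast_sublist _) hlb)
          hna (fun x hx => hnb x (List.mem_of_mem_dropLast hx))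
          hsa (by rw [List.length_dropLast]; omega)
        set c : List ℤ := lb.drop (lb.length - (s+1)) with hc
        have hcs : c.Pairwise (· < ·) := List.Pairwise.sublist (List.drop_sublist _ _) hlb
        have hclen : c.length = s + 1 := by rw [hc, List.length_drop]; omega
        have hcne : c ≠ [] := by intro h; rw [h] at hclen; simp at hclen
        have hctail : c.tail = lb.drop (lb.length - s) := by
          rw [hc, List.tail_drop]
          congr 1
          omega
        have hcdrop : c.dropLast = lb.dropLast.drop (lb.dropLast.length - s) := by
          rw [List.dropLast_eq_take, hclen, Nat.add_sub_cancel, hc,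
            List.length_dropLast, List.dropLast_eq_take, List.drop_take]
          have e1 : lb.length - 1 - (lb.length - 1 - s) = s := by omega
          have e2 : lb.length - (s+1) = lb.length - 1 - s := by omega
          rw [e1, e2]
        have hL'ne : L' ≠ [] := by intro h; rw [h] at h4; simp at h4
        have hgl := glue h2 (dsum_chain hcs) hL'ne
          (by rw [dsum_head? hcne, h5, hcdrop])
        refine ⟨L'.dropLast ++ dsum c, ?_, hgl.1, ?_, ?_, ?_⟩
        · have hlen := hgl.2.2.2
          rw [dsum_length, hclen, h1] at hlen
          have e1 : la.length + lb.dropLast.length - s + 1 + 1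
              = la.length + lb.length - s + 1 := by
            rw [List.length_dropLast]; omega
          rw [← e1]
          have e2 : s * (la.length + lb.dropLast.length - s + 1 + 1)
              = s * (la.length + lb.dropLast.length - s + 1) + s := by ring
          rw [e2]
          linarith [hlen]
        · intro x hx
          rcases List.mem_append.mp hx with hx | hx
          · obtain ⟨B, hB1, hB2, hB3⟩ := h3 x (List.mem_of_mem_dropLast hx)
            refine ⟨B, ?_, hB2, hB3⟩
            intro z hz
            have hz1 := hB1 hz
            rw [Finset.mem_union] at hz1 ⊢
            rcases hz1 with h | h
            · exact Or.inl h
            · exact Or.inr (List.mem_toFinset.mpr (List.mem_of_mem_dropLast (List.mem_toFinset.mp h)))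
          · obtain ⟨y, hy, rfl⟩ : ∃ y ∈ c, c.sum - y = x := by
              simp only [dsum, List.mem_map, List.mem_reverse] at hx
              exact hx
            refine ⟨c.toFinset.erase y, ?_, ?_, (erase_witness hcs hy).2⟩
            · intro z hz
              have hz1 : z ∈ c.toFinset := Finset.mem_of_mem_erase hz
              rw [List.mem_toFinset] at hz1
              have hz2 : z ∈ lb := (List.drop_sublist _ _).subset hz1
              rw [Finset.mem_union]
              exact Or.inr (List.mem_toFinset.mpr hz2)
            · have := (erase_witness hcs hy).1
              omega
        · rw [hgl.2.1, h4]
        · rw [hgl.2.2.1, dsum_getLast? hcne, hctail]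
      · -- Case C : la.length = lb.length = s
        have hlas : la.length = s := by omega
        have hlbs : lb.length = s := by omega
        obtain ⟨t, rfl⟩ : ∃ t, s = t + 1 := ⟨s - 1, by omega⟩
        have hlane : la ≠ [] := by intro h; rw [h] at hlas; simp at hlas
        have hlbne : lb ≠ [] := by intro h; rw [h] at hlbs; simp at hlbs
        obtain ⟨L', h1, h2, h3, h4, h5⟩ := ih la.tail lb.dropLast t
          (by rw [List.length_tail, List.length_dropLast]; omega)
          (List.Pairwise.sublist (List.tail_sublist _) hla)
          (List.Pairwise.sublist (List.dropLast_sublist _) hlb)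
          (fun x hx => hna x (List.mem_of_mem_tail hx))
          (fun x hx => hnb x (List.mem_of_mem_dropLast hx))
          (by rw [List.length_tail]; omega) (by rw [List.length_dropLast]; omega)
        have hlat : la.tail.length = t := by rw [List.length_tail]; omega
        have hlbd : lb.dropLast.length = t := by rw [List.length_dropLast]; omega
        have h4' : L'.head? = some la.tail.sum := by
          rw [h4, List.take_of_length_le (by omega)]
        have h5' : L'.getLast? = some lb.dropLast.sum := by
          rw [h5, hlbd, Nat.sub_self, List.drop_zero]
        have hL'ne : L' ≠ [] := by intro h; rw [h] at h4'; simp at h4'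
        have hg1 := glue h2 (dsum_chain hlb) hL'ne (by rw [dsum_head? hlbne, h5'])
        set R1 : List ℤ := L'.dropLast ++ dsum lb with hR1
        have hR1last : R1.getLast? = some lb.tail.sum := by
          rw [hg1.2.2.1, dsum_getLast? hlbne]
        have hstep : lb.tail.sum < lb.sum := by
          rcases lb with _ | ⟨b, lbt⟩
          · simp at hlbne
          · have := hnb b (by simp)
            simp
            omega
        have hg2chain : (R1 ++ [lb.sum]).Chain' (· < ·) := by
          refine hg1.1.append (List.isChain_singleton _) ?_
          intro x hx y hy
          rw [hR1last] at hx
          simp at hx hy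
          linarith [hstep]
        have hR1ne : R1 ≠ [] := by
          intro h
          have hx := hg1.2.1
          rw [h, h4'] at hx
          simp at hx
        have hR2head : (R1 ++ [lb.sum]).head? = some la.tail.sum := by
          rw [List.head?_append_of_ne_nil _ hR1ne, hg1.2.1, h4']
        have hg3 := glue (dsum_chain hla) hg2chain (dsum_ne_nil hlane)
          (by rw [hR2head, dsum_getLast? hlane])
        set R3 : List ℤ := (dsum la).dropLast ++ (R1 ++ [lb.sum]) with hR3
        have hR3head : R3.head? = some la.dropLast.sum := by
          rw [hg3.2.1, dsum_head? hlane]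
        have hsumla : la.sum = la.dropLast.sum + la.getLast hlane := by
          conv_lhs => rw [← List.dropLast_append_getLast hlane]
          rw [List.sum_append]
          simp
        have hfinalchain : (la.sum :: R3).Chain' (· < ·) := by
          refine hg3.1.cons ?_
          intro y hy
          rw [hR3head] at hy
          simp at hy
          have hneg : la.getLast hlane < 0 := hna _ (List.getLast_mem hlane)
          linarith [hsumla, hneg]
        have hR3ne : R3 ≠ [] := by
          intro h; rw [h] at hR3head; simp at hR3head
        refine ⟨la.sum :: R3, ?_, hfinalchain, ?_, ?_, ?_⟩
        · -- length
          have l3 := hg3.2.2.2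
          have l1 := hg1.2.2.2
          rw [dsum_length] at l3
          rw [dsum_length] at l1
          rw [h1, hlat, hlbd] at l1
          have eX : t + t - t + 1 = t + 1 := by omega
          rw [eX] at l1
          have e1 : la.length + lb.length - (t+1) + 1 = t + 2 := by omega
          simp only [List.length_cons, List.length_append] at l3 l1 ⊢
          rw [e1]
          have k1 : (t+1) * (t+2) = t * (t+1) + 2*t + 2 := by ring
          rw [k1]
          simp at l3
          linarith [l3, l1, hlas, hlbs]
        · intro x hx
          rw [List.mem_cons] at hx
          rcases hx with rfl | hx
          · refine ⟨la.toFinset, fun z hz => Finset.mem_union_left _ hz, ?_, ?_⟩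
            · rw [List.toFinset_card_of_nodup hla.nodup]; omega
            · rw [List.sum_toFinset _ hla.nodup]; simp
          rw [hR3, List.mem_append] at hx
          rcases hx with hx | hx
          · have hx' : x ∈ dsum la := List.mem_of_mem_dropLast hx
            obtain ⟨y, hy, rfl⟩ : ∃ y ∈ la, la.sum - y = x := by
              simp only [dsum, List.mem_map, List.mem_reverse] at hx'
              exact hx'
            refine ⟨la.toFinset.erase y, ?_, ?_, (erase_witness hla hy).2⟩
            · intro z hz
              exact Finset.mem_union_left _ (Finset.mem_of_mem_erase hz)
            · have := (erase_witness hla hy).1; omega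
          rw [List.mem_append] at hx
          rcases hx with hx | hx
          · rw [hR1, List.mem_append] at hx
            rcases hx with hx | hx
            · obtain ⟨B, hB1, hB2, hB3⟩ := h3 x (List.mem_of_mem_dropLast hx)
              refine ⟨B, ?_, by omega, hB3⟩
              intro z hz
              have hz1 := hB1 hz
              rw [Finset.mem_union] at hz1 ⊢
              rcases hz1 with h | h
              · exact Or.inl (List.mem_toFinset.mpr (List.mem_of_mem_tail (List.mem_toFinset.mp h)))
              · exact Or.inr (List.mem_toFinset.mpr (List.mem_of_mem_dropLast (List.mem_toFinset.mp h)))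
            · obtain ⟨y, hy, rfl⟩ : ∃ y ∈ lb, lb.sum - y = x := by
                simp only [dsum, List.mem_map, List.mem_reverse] at hx
                exact hx
              refine ⟨lb.toFinset.erase y, ?_, ?_, (erase_witness hlb hy).2⟩
              · intro z hz
                exact Finset.mem_union_right _ (Finset.mem_of_mem_erase hz)
              · have := (erase_witness hlb hy).1; omega
          · simp at hx
            refine ⟨lb.toFinset, fun z hz => Finset.mem_union_right _ hz, ?_, ?_⟩
            · rw [List.toFinset_card_of_nodup hlb.nodup]; omega
            · rw [List.sum_toFinset _ hlb.nodup]; simp [hx]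
        · -- head?
          rw [List.take_of_length_le (show la.length ≤ t + 1 by omega)]
          simp
        · -- getLast?
          have hcons : (la.sum :: R3).getLast? = R3.getLast? := by
            rw [show la.sum :: R3 = [la.sum] ++ R3 by simp,
              List.getLast?_append_of_ne_nil _ hR3ne]
          rw [hcons, hg3.2.2.1, List.getLast?_concat]
          have e : lb.length - (t+1) = 0 := by omega
          rw [e, List.drop_zero]

end SigmaAux

theorem stmt_6 (n p α : ℕ) (hn : 1 ≤ n) (hp : 1 ≤ p) (A : Finset ℤ)
    (hneg : (A.filter (fun x => x < 0)).card = n)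
    (hpos : (A.filter (fun x => 0 < x)).card = p)
    (h0 : (0 : ℤ) ∉ A)
    (hα : α ≤ n + p) (hαn : n < α) (hαp : p < α) :
    ((sigmaAtLeast A α).card : ℤ) ≥
      (n : ℤ) * ((n : ℤ) + 1) / 2 + (p : ℤ) * ((p : ℤ) + 1) / 2
        - ((α : ℤ) - (n : ℤ)) * ((α : ℤ) - (n : ℤ) + 1) / 2
        - ((α : ℤ) - (p : ℤ)) * ((α : ℤ) - (p : ℤ) + 1) / 2 + 1 := by
  classical
  set F := A.filter (fun x => x < 0) with hF
  set G := A.filter (fun x => 0 < x) with hG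
  set la := F.sort (· ≤ ·) with hla
  set lb := G.sort (· ≤ ·) with hlb
  have hlaS : la.Pairwise (· < ·) := List.sortedLT_iff_pairwise.mp F.sortedLT_sort
  have hlbS : lb.Pairwise (· < ·) := List.sortedLT_iff_pairwise.mp G.sortedLT_sort
  have hlal : la.length = n := by rw [hla, Finset.length_sort, hneg]
  have hlbl : lb.length = p := by rw [hlb, Finset.length_sort, hpos]
  have hlamem : ∀ x ∈ la, x < 0 := by
    intro x hx
    rw [hla, Finset.mem_sort, hF, Finset.mem_filter] at hx
    exact hx.2
  have hlbmem : ∀ x ∈ lb, 0 < x := by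
    intro x hx
    rw [hlb, Finset.mem_sort, hG, Finset.mem_filter] at hx
    exact hx.2
  set s := n + p - α with hs
  obtain ⟨L, h1, h2, h3, h4, h5⟩ := SigmaAux.key (n + p) la lb s
    (by omega) hlaS hlbS hlamem hlbmem (by omega) (by omega)
  have hcardA : A.card = n + p := by
    have h1 := Finset.card_filter_add_card_filter_not (s := A)
      (p := fun x => x < 0)
    have he : A.filter (fun x => ¬ x < 0) = A.filter (fun x => 0 < x) := by
      apply Finset.filter_congr
      intro x hx
      have hx0 : x ≠ 0 := fun h => h0 (h ▸ hx)
      constructor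
      · intro h; omega
      · intro h; omega
    rw [he] at h1
    rw [← hF] at h1
    rw [show A.filter (fun x => 0 < x) = G from rfl] at h1
    omega
  have hmem : ∀ x ∈ L, A.sum id - x ∈ sigmaAtLeast A α := by
    intro x hx
    obtain ⟨B, hB1, hB2, hB3⟩ := h3 x hx
    have hBA : B ⊆ A := by
      intro z hz
      have := hB1 hz
      rw [Finset.mem_union] at this
      rcases this with h | h
      · rw [List.mem_toFinset, hla, Finset.mem_sort, hF, Finset.mem_filter] at h
        exact h.1
      · rw [List.mem_toFinset, hlb, Finset.mem_sort, hG, Finset.mem_filter] at h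
        exact h.1
    rw [sigmaAtLeast, Finset.mem_image]
    refine ⟨A \ B, ?_, ?_⟩
    · rw [Finset.mem_filter, Finset.mem_powerset]
      refine ⟨Finset.sdiff_subset, ?_⟩
      rw [Finset.card_sdiff_of_subset hBA, hcardA]
      omega
    · rw [Finset.sum_sdiff_eq_sub hBA, hB3]
  have hchain : (L.map (fun x => A.sum id - x)).Chain' (· > ·) :=
    (List.isChain_map _).mpr (h2.imp (fun a b hab => sub_lt_sub_left hab (A.sum id)))
  have hnd : (L.map (fun x => A.sum id - x)).Nodup := by
    have hpair := List.isChain_iff_pairwise.mp hchain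
    exact hpair.imp (fun h => ne_of_gt h)
  have hsub : (L.map (fun x => A.sum id - x)).toFinset ⊆ sigmaAtLeast A α := by
    intro y hy
    rw [List.mem_toFinset, List.mem_map] at hy
    obtain ⟨x, hx, rfl⟩ := hy
    exact hmem x hx
  have hcard2 : L.length ≤ (sigmaAtLeast A α).card := by
    calc L.length = (L.map (fun x => A.sum id - x)).length := (List.length_map _).symm
    _ = (L.map (fun x => A.sum id - x)).toFinset.card := (List.toFinset_card_of_nodup hnd).symm
    _ ≤ _ := Finset.card_le_card hsub
  have hlen : L.length = s * (α + 1) + 1 := by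
    rw [h1, hlal, hlbl]
    have e : n + p - s + 1 = α + 1 := by omega
    rw [e]
  have hN : (s : ℤ) * ((α : ℤ) + 1) + 1 ≤ ((sigmaAtLeast A α).card : ℤ) := by
    rw [hlen] at hcard2
    exact_mod_cast hcard2
  obtain ⟨k1, hk1⟩ := Int.even_mul_succ_self (n : ℤ)
  obtain ⟨k2, hk2⟩ := Int.even_mul_succ_self (p : ℤ)
  obtain ⟨k3, hk3⟩ := Int.even_mul_succ_self ((α : ℤ) - (n : ℤ))
  obtain ⟨k4, hk4⟩ := Int.even_mul_succ_self ((α : ℤ) - (p : ℤ))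
  have e1 : (n : ℤ) * ((n : ℤ) + 1) / 2 = k1 := by rw [hk1]; omega
  have e2 : (p : ℤ) * ((p : ℤ) + 1) / 2 = k2 := by rw [hk2]; omega
  have e3 : ((α : ℤ) - (n : ℤ)) * ((α : ℤ) - (n : ℤ) + 1) / 2 = k3 := by rw [hk3]; omega
  have e4 : ((α : ℤ) - (p : ℤ)) * ((α : ℤ) - (p : ℤ) + 1) / 2 = k4 := by rw [hk4]; omega
  rw [ge_iff_le, e1, e2, e3, e4]
  have hscast : (s : ℤ) = (n : ℤ) + (p : ℤ) - (α : ℤ) := by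
    rw [hs]; push_cast [Nat.cast_sub (show α ≤ n + p from hα)]; ring
  have h2x : 2*(k1 + k2 - k3 - k4) = 2*(((n : ℤ) + (p : ℤ) - (α : ℤ)) * ((α : ℤ) + 1)) := by
    linear_combination (-1 : ℤ)*hk1 - hk2 + hk3 + hk4
  rw [hscast] at hN
  linarith [hN, h2x]
end

section
/- Let n and p be positive integers and let A be a finite set of integers consisting of exactly n negative integers, exactly p positive integers, and 0. If α is an integer with 0 ≤ α ≤ n + p + 1, α ≤ n, and α ≤ p, then |Σ_α(A)| ≥ n(n+1)/2 + p(p+1)/2 + 1. -/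
open Finset

lemma sigma_mem_intro {A : Finset ℤ} {α : ℕ} {B : Finset ℤ} (hBA : B ⊆ A) (hc : α ≤ B.card) :
    B.sum id ∈ sigmaAtLeast A α := by
  simp only [sigmaAtLeast, mem_image, mem_filter, mem_powerset]
  exact ⟨B, ⟨hBA, hc⟩, rfl⟩

lemma sigma_mem_elim {A : Finset ℤ} {α : ℕ} {x : ℤ} (hx : x ∈ sigmaAtLeast A α) :
    ∃ B : Finset ℤ, B ⊆ A ∧ α ≤ B.card ∧ B.sum id = x := by
  simp only [sigmaAtLeast, mem_image, mem_filter, mem_powerset] at hx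
  obtain ⟨B, ⟨h1, h2⟩, h3⟩ := hx
  exact ⟨B, h1, h2, h3⟩

lemma sum_lower_s7 {A B : Finset ℤ} (hB : B ⊆ A) :
    (A.filter (fun x => x < 0)).sum id ≤ B.sum id := by
  have h1 : B.filter (fun x => x < 0) ⊆ A.filter (fun x => x < 0) :=
    filter_subset_filter _ hB
  have h2 := Finset.sum_sdiff (f := id) h1
  have hnp : ((A.filter (fun x => x < 0)) \ (B.filter (fun x => x < 0))).sum id ≤ 0 := by
    apply Finset.sum_nonpos
    intro i hi
    have := (mem_filter.1 (mem_sdiff.1 hi).1).2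
    exact le_of_lt this
  have h3 := Finset.sum_filter_add_sum_filter_not B (fun x => x < 0) id
  have hnn : (0:ℤ) ≤ (B.filter (fun x => ¬ x < 0)).sum id := by
    apply Finset.sum_nonneg
    intro i hi
    exact not_lt.1 (mem_filter.1 hi).2
  linarith

lemma sum_upper {A B : Finset ℤ} (hB : B ⊆ A) :
    B.sum id ≤ (A.filter (fun x => 0 < x)).sum id := by
  have h1 : B.filter (fun x => 0 < x) ⊆ A.filter (fun x => 0 < x) :=
    filter_subset_filter _ hB
  have h2 := Finset.sum_sdiff (f := id) h1
  have hnp : (0:ℤ) ≤ ((A.filter (fun x => 0 < x)) \ (B.filter (fun x => 0 < x))).sum id := by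
    apply Finset.sum_nonneg
    intro i hi
    exact le_of_lt (mem_filter.1 (mem_sdiff.1 hi).1).2
  have h3 := Finset.sum_filter_add_sum_filter_not B (fun x => 0 < x) id
  have hnn : (B.filter (fun x => ¬ 0 < x)).sum id ≤ 0 := by
    apply Finset.sum_nonpos
    intro i hi
    exact not_lt.1 (mem_filter.1 hi).2
  linarith

lemma neg_sum_nonpos (A : Finset ℤ) : (A.filter (fun x => x < 0)).sum id ≤ 0 :=
  Finset.sum_nonpos (fun i hi => le_of_lt (mem_filter.1 hi).2)

lemma pos_sum_nonneg (A : Finset ℤ) : (0:ℤ) ≤ (A.filter (fun x => 0 < x)).sum id :=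
  Finset.sum_nonneg (fun i hi => le_of_lt (mem_filter.1 hi).2)

lemma main_bound : ∀ k n p α : ℕ, ∀ A : Finset ℤ,
    n + p ≤ k →
    (A.filter (fun x => x < 0)).card = n →
    (A.filter (fun x => 0 < x)).card = p →
    (0:ℤ) ∈ A → α ≤ n → α ≤ p →
    n*(n+1) + p*(p+1) + 2 ≤ 2 * (sigmaAtLeast A α).card := by
  intro k
  induction k with
  | zero =>
    intro n p α A hk hneg hpos h0 hαn hαp
    have hn0 : n = 0 := by omega
    have hp0 : p = 0 := by omega
    have hα0 : α = 0 := by omega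
    subst hn0 hp0 hα0
    have h : (0:ℤ) ∈ sigmaAtLeast A 0 := by
      have := sigma_mem_intro (A := A) (B := ∅) (α := 0) (by simp) (by simp)
      simpa using this
    have : 1 ≤ (sigmaAtLeast A 0).card := Finset.card_pos.2 ⟨0, h⟩
    omega
  | succ k ih =>
    intro n p α A hk hneg hpos h0 hαn hαp
    by_cases hk' : n + p ≤ k
    · exact ih n p α A hk' hneg hpos h0 hαn hαp
    set Neg := A.filter (fun x => x < 0) with hNeg
    set Pos := A.filter (fun x => 0 < x) with hPos
    rcases Nat.eq_zero_or_pos α with hα0 | hα1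
    · -- α = 0 case
      subst hα0
      rcases Nat.eq_zero_or_pos p with hp0 | hp1
      · -- p = 0, so n ≥ 1
        have hn1 : 1 ≤ n := by omega
        have hNegne : Neg.Nonempty := Finset.card_pos.1 (by omega)
        set a := Neg.min' hNegne with ha
        have haNeg : a ∈ Neg := Finset.min'_mem _ _
        have haA : a ∈ A := (mem_filter.1 haNeg).1
        have ha0 : a < 0 := (mem_filter.1 haNeg).2
        set A' := A.erase a with hA'
        have hA'neg : A'.filter (fun x => x < 0) = Neg.erase a := by
          rw [hA', Finset.filter_erase]
        have hA'pos : A'.filter (fun x => 0 < x) = Pos := by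
          rw [hA', Finset.filter_erase]
          rw [Finset.erase_eq_of_notMem]
          intro h
          have := (mem_filter.1 h).2
          omega
        have h0A' : (0:ℤ) ∈ A' := Finset.mem_erase.2 ⟨by omega, h0⟩
        have hcard' : (A'.filter (fun x => x < 0)).card = n - 1 := by
          rw [hA'neg, Finset.card_erase_of_mem haNeg, hneg]
        have IH := ih (n-1) p 0 A' (by omega) hcard' (by rw [hA'pos]; exact hpos) h0A'
          (by omega) (by omega)
        -- extra low values
        set lows : Finset ℤ := insert (Neg.sum id)
          ((Neg.erase a).image (fun c => Neg.sum id - c)) with hlows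
        have hNegsum_a : (Neg.erase a).sum id = Neg.sum id - a := by
          have := Finset.sum_erase_eq_sub (f := id) haNeg
          simpa using this
        -- every elt of sigma A' 0 is ≥ Neg.sum - a
        have hTlow : ∀ x ∈ sigmaAtLeast A' 0, Neg.sum id - a ≤ x := by
          intro x hx
          obtain ⟨B, hBA, _, hBs⟩ := sigma_mem_elim hx
          have := sum_lower_s7 hBA
          rw [hA'neg, hNegsum_a] at this
          omega
        -- lows elements < Neg.sum - a
        have hlows_lt : ∀ x ∈ lows, x < Neg.sum id - a := by
          intro x hx
          rw [hlows, mem_insert] at hx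
          rcases hx with rfl | hx
          · omega
          · obtain ⟨c, hc, rfl⟩ := mem_image.1 hx
            have hcm := Finset.mem_erase.1 hc
            have : a < c := lt_of_le_of_ne (Finset.min'_le _ _ hcm.2) (Ne.symm hcm.1)
            omega
        have hlows_mem : lows ⊆ sigmaAtLeast A 0 := by
          intro x hx
          rw [hlows, mem_insert] at hx
          rcases hx with rfl | hx
          · exact sigma_mem_intro (filter_subset _ _) (by omega)
          · obtain ⟨c, hc, rfl⟩ := mem_image.1 hx
            have hcm := Finset.mem_erase.1 hc
            have : (Neg.erase c).sum id = Neg.sum id - c := by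
              have := Finset.sum_erase_eq_sub (f := id) hcm.2
              simpa using this
            rw [← this]
            exact sigma_mem_intro ((Finset.erase_subset _ _).trans (filter_subset _ _)) (by omega)
        have hT_mem : sigmaAtLeast A' 0 ⊆ sigmaAtLeast A 0 := by
          intro x hx
          obtain ⟨B, hBA, _, hBs⟩ := sigma_mem_elim hx
          rw [← hBs]
          exact sigma_mem_intro (hBA.trans (Finset.erase_subset _ _)) (by omega)
        have hdisj : Disjoint lows (sigmaAtLeast A' 0) := by
          rw [Finset.disjoint_left]
          intro x hx hx'
          have := hlows_lt x hx
          have := hTlow x hx'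
          omega
        have hsub : lows ∪ sigmaAtLeast A' 0 ⊆ sigmaAtLeast A 0 :=
          Finset.union_subset hlows_mem hT_mem
        have hcardlows : lows.card = n := by
          rw [hlows]
          rw [Finset.card_insert_of_notMem, Finset.card_image_of_injective _
            (fun x y h => by omega)]
          · rw [Finset.card_erase_of_mem haNeg, hneg]; omega
          · intro h
            obtain ⟨c, hc, hce⟩ := mem_image.1 h
            have := (mem_filter.1 ((Finset.erase_subset _ _) hc)).2
            omega
        have hfinal : lows.card + (sigmaAtLeast A' 0).card ≤ (sigmaAtLeast A 0).card := by
          rw [← Finset.card_union_of_disjoint hdisj]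
          exact Finset.card_le_card hsub
        have hp0' : p = 0 := by omega
        subst hp0'
        obtain ⟨m, rfl⟩ : ∃ m, n = m + 1 := ⟨n - 1, by omega⟩
        simp only [Nat.add_sub_cancel] at IH
        have g1 : (m+1)*(m+1+1) = m*(m+1) + 2*(m+1) := by ring
        linarith [hfinal, IH, hcardlows]
      · -- p ≥ 1, α = 0 : remove the largest positive
        have hPosne : Pos.Nonempty := Finset.card_pos.1 (by omega)
        set b := Pos.max' hPosne with hb
        have hbPos : b ∈ Pos := Finset.max'_mem _ _
        have hbA : b ∈ A := (mem_filter.1 hbPos).1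
        have hb0 : 0 < b := (mem_filter.1 hbPos).2
        set A' := A.erase b with hA'
        have hA'pos : A'.filter (fun x => 0 < x) = Pos.erase b := by
          rw [hA', Finset.filter_erase]
        have hA'neg : A'.filter (fun x => x < 0) = Neg := by
          rw [hA', Finset.filter_erase]
          rw [Finset.erase_eq_of_notMem]
          intro h
          have := (mem_filter.1 h).2
          omega
        have h0A' : (0:ℤ) ∈ A' := Finset.mem_erase.2 ⟨by omega, h0⟩
        have hcard' : (A'.filter (fun x => 0 < x)).card = p - 1 := by
          rw [hA'pos, Finset.card_erase_of_mem hbPos, hpos]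
        have IH := ih n (p-1) 0 A' (by omega) (by rw [hA'neg]; exact hneg) hcard' h0A'
          (by omega) (by omega)
        set highs : Finset ℤ := insert (Pos.sum id)
          ((Pos.erase b).image (fun c => Pos.sum id - c)) with hhighs
        have hPossum_b : (Pos.erase b).sum id = Pos.sum id - b := by
          have := Finset.sum_erase_eq_sub (f := id) hbPos
          simpa using this
        have hThigh : ∀ x ∈ sigmaAtLeast A' 0, x ≤ Pos.sum id - b := by
          intro x hx
          obtain ⟨B, hBA, _, hBs⟩ := sigma_mem_elim hx
          have := sum_upper hBA
          rw [hA'pos, hPossum_b] at this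
          omega
        have hhighs_gt : ∀ x ∈ highs, Pos.sum id - b < x := by
          intro x hx
          rw [hhighs, mem_insert] at hx
          rcases hx with rfl | hx
          · omega
          · obtain ⟨c, hc, rfl⟩ := mem_image.1 hx
            have hcm := Finset.mem_erase.1 hc
            have : c < b := lt_of_le_of_ne (Finset.le_max' _ _ hcm.2) hcm.1
            omega
        have hhighs_mem : highs ⊆ sigmaAtLeast A 0 := by
          intro x hx
          rw [hhighs, mem_insert] at hx
          rcases hx with rfl | hx
          · exact sigma_mem_intro (filter_subset _ _) (by omega)
          · obtain ⟨c, hc, rfl⟩ := mem_image.1 hx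
            have hcm := Finset.mem_erase.1 hc
            have : (Pos.erase c).sum id = Pos.sum id - c := by
              have := Finset.sum_erase_eq_sub (f := id) hcm.2
              simpa using this
            rw [← this]
            exact sigma_mem_intro ((Finset.erase_subset _ _).trans (filter_subset _ _)) (by omega)
        have hT_mem : sigmaAtLeast A' 0 ⊆ sigmaAtLeast A 0 := by
          intro x hx
          obtain ⟨B, hBA, _, hBs⟩ := sigma_mem_elim hx
          rw [← hBs]
          exact sigma_mem_intro (hBA.trans (Finset.erase_subset _ _)) (by omega)
        have hdisj : Disjoint highs (sigmaAtLeast A' 0) := by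
          rw [Finset.disjoint_left]
          intro x hx hx'
          have := hhighs_gt x hx
          have := hThigh x hx'
          omega
        have hsub : highs ∪ sigmaAtLeast A' 0 ⊆ sigmaAtLeast A 0 :=
          Finset.union_subset hhighs_mem hT_mem
        have hcardhighs : highs.card = p := by
          rw [hhighs]
          rw [Finset.card_insert_of_notMem, Finset.card_image_of_injective _
            (fun x y h => by omega)]
          · rw [Finset.card_erase_of_mem hbPos, hpos]; omega
          · intro h
            obtain ⟨c, hc, hce⟩ := mem_image.1 h
            have := (mem_filter.1 ((Finset.erase_subset _ _) hc)).2
            omega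
        have hfinal : highs.card + (sigmaAtLeast A' 0).card ≤ (sigmaAtLeast A 0).card := by
          rw [← Finset.card_union_of_disjoint hdisj]
          exact Finset.card_le_card hsub
        obtain ⟨q, rfl⟩ : ∃ q, p = q + 1 := ⟨p - 1, by omega⟩
        simp only [Nat.add_sub_cancel] at IH
        have g2 : (q+1)*(q+1+1) = q*(q+1) + 2*(q+1) := by ring
        linarith [hfinal, IH, hcardhighs]
    · -- α ≥ 1, so n ≥ 1 and p ≥ 1: remove both extremes
      have hn1 : 1 ≤ n := le_trans hα1 hαn
      have hp1 : 1 ≤ p := le_trans hα1 hαp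
      have hNegne : Neg.Nonempty := Finset.card_pos.1 (by omega)
      have hPosne : Pos.Nonempty := Finset.card_pos.1 (by omega)
      set a := Neg.min' hNegne with ha
      set b := Pos.max' hPosne with hb
      have haNeg : a ∈ Neg := Finset.min'_mem _ _
      have hbPos : b ∈ Pos := Finset.max'_mem _ _
      have haA : a ∈ A := (mem_filter.1 haNeg).1
      have hbA : b ∈ A := (mem_filter.1 hbPos).1
      have ha0 : a < 0 := (mem_filter.1 haNeg).2
      have hb0 : 0 < b := (mem_filter.1 hbPos).2
      set A' := (A.erase a).erase b with hA'
      have hA'neg : A'.filter (fun x => x < 0) = Neg.erase a := by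
        rw [hA', Finset.filter_erase, Finset.filter_erase]
        rw [Finset.erase_eq_of_notMem (s := (Neg.erase a))]
        intro h
        have := (mem_filter.1 ((Finset.erase_subset _ _) h)).2
        omega
      have hA'pos : A'.filter (fun x => 0 < x) = Pos.erase b := by
        rw [hA', Finset.filter_erase, Finset.filter_erase]
        congr 1
        rw [Finset.erase_eq_of_notMem]
        intro h
        have := (mem_filter.1 h).2
        omega
      have h0A' : (0:ℤ) ∈ A' :=
        Finset.mem_erase.2 ⟨by omega, Finset.mem_erase.2 ⟨by omega, h0⟩⟩
      have haA' : a ∉ A' := by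
        rw [hA']
        intro h
        exact (Finset.mem_erase.1 ((Finset.erase_subset _ _).trans (fun _ h => h) h)).1 rfl
      have hbA' : b ∉ A' := fun h => (Finset.mem_erase.1 h).1 rfl
      have hcardn' : (A'.filter (fun x => x < 0)).card = n - 1 := by
        rw [hA'neg, Finset.card_erase_of_mem haNeg, hneg]
      have hcardp' : (A'.filter (fun x => 0 < x)).card = p - 1 := by
        rw [hA'pos, Finset.card_erase_of_mem hbPos, hpos]
      have IH := ih (n-1) (p-1) (α-1) A' (by omega) hcardn' hcardp' h0A'
        (by omega) (by omega)
      have hNegsum_a : (Neg.erase a).sum id = Neg.sum id - a := by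
        have := Finset.sum_erase_eq_sub (f := id) haNeg
        simpa using this
      have hPossum_b : (Pos.erase b).sum id = Pos.sum id - b := by
        have := Finset.sum_erase_eq_sub (f := id) hbPos
        simpa using this
      -- shifted copy
      set T : Finset ℤ := (sigmaAtLeast A' (α-1)).image (fun y => a + b + y) with hT
      have hT_mem : T ⊆ sigmaAtLeast A α := by
        intro x hx
        obtain ⟨y, hy, rfl⟩ := mem_image.1 hx
        obtain ⟨B, hBA, hBc, hBs⟩ := sigma_mem_elim hy
        have haB : a ∉ B := fun h => haA' (hBA h)
        have hbB : b ∉ B := fun h => hbA' (hBA h)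
        have habne : a ≠ b := by omega
        have hsum : (insert a (insert b B)).sum id = a + b + y := by
          rw [Finset.sum_insert (by simp [haB, habne]), Finset.sum_insert hbB, hBs]
          simp only [id_eq]
          ring
        rw [← hsum]
        apply sigma_mem_intro
        · intro x hx
          rcases Finset.mem_insert.1 hx with rfl | hx
          · exact haA
          rcases Finset.mem_insert.1 hx with rfl | hx
          · exact hbA
          · exact ((Finset.erase_subset _ _).trans (Finset.erase_subset _ _)) (hBA hx)
        · rw [Finset.card_insert_of_notMem (by simp [haB, habne]),
            Finset.card_insert_of_notMem hbB]
          omega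
      -- bounds on T
      have hTbound : ∀ x ∈ T, Neg.sum id + b ≤ x ∧ x ≤ Pos.sum id + a := by
        intro x hx
        obtain ⟨y, hy, rfl⟩ := mem_image.1 hx
        obtain ⟨B, hBA, _, hBs⟩ := sigma_mem_elim hy
        have hl := sum_lower_s7 hBA
        have hu := sum_upper hBA
        rw [hA'neg, hNegsum_a] at hl
        rw [hA'pos, hPossum_b] at hu
        constructor <;> omega
      -- lows : Neg.sum and Neg.sum + c for c ∈ Pos.erase b
      set lows : Finset ℤ := insert (Neg.sum id)
        ((Pos.erase b).image (fun c => Neg.sum id + c)) with hlows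
      have hlows_lt : ∀ x ∈ lows, x < Neg.sum id + b := by
        intro x hx
        rw [hlows, mem_insert] at hx
        rcases hx with rfl | hx
        · omega
        · obtain ⟨c, hc, rfl⟩ := mem_image.1 hx
          have hcm := Finset.mem_erase.1 hc
          have : c < b := lt_of_le_of_ne (Finset.le_max' _ _ hcm.2) hcm.1
          omega
      have hlows_mem : lows ⊆ sigmaAtLeast A α := by
        intro x hx
        rw [hlows, mem_insert] at hx
        rcases hx with rfl | hx
        · exact sigma_mem_intro (filter_subset _ _) (by omega)
        · obtain ⟨c, hc, rfl⟩ := mem_image.1 hx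
          have hcm := Finset.mem_erase.1 hc
          have hcPos : c ∈ Pos := hcm.2
          have hcNeg : c ∉ Neg := by
            intro h
            have := (mem_filter.1 h).2
            have := (mem_filter.1 hcPos).2
            omega
          have hsum : (insert c Neg).sum id = Neg.sum id + c := by
            rw [Finset.sum_insert hcNeg]; simp; ring
          rw [← hsum]
          apply sigma_mem_intro
          · intro x hx
            rcases Finset.mem_insert.1 hx with rfl | hx
            · exact (mem_filter.1 hcPos).1
            · exact (filter_subset _ _) hx
          · rw [Finset.card_insert_of_notMem hcNeg, hneg]
            omega
      have hcardlows : lows.card = p := by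
        rw [hlows]
        rw [Finset.card_insert_of_notMem, Finset.card_image_of_injective _
          (fun x y h => by omega)]
        · rw [Finset.card_erase_of_mem hbPos, hpos]; omega
        · intro h
          obtain ⟨c, hc, hce⟩ := mem_image.1 h
          have := (mem_filter.1 ((Finset.erase_subset _ _) hc)).2
          omega
      -- highs : Pos.sum and Pos.sum + c for c ∈ Neg.erase a
      set highs : Finset ℤ := insert (Pos.sum id)
        ((Neg.erase a).image (fun c => Pos.sum id + c)) with hhighs
      have hhighs_gt : ∀ x ∈ highs, Pos.sum id + a < x := by
        intro x hx
        rw [hhighs, mem_insert] at hx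
        rcases hx with rfl | hx
        · omega
        · obtain ⟨c, hc, rfl⟩ := mem_image.1 hx
          have hcm := Finset.mem_erase.1 hc
          have : a < c := lt_of_le_of_ne (Finset.min'_le _ _ hcm.2) (Ne.symm hcm.1)
          omega
      have hhighs_mem : highs ⊆ sigmaAtLeast A α := by
        intro x hx
        rw [hhighs, mem_insert] at hx
        rcases hx with rfl | hx
        · exact sigma_mem_intro (filter_subset _ _) (by omega)
        · obtain ⟨c, hc, rfl⟩ := mem_image.1 hx
          have hcm := Finset.mem_erase.1 hc
          have hcNeg : c ∈ Neg := hcm.2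
          have hcPos : c ∉ Pos := by
            intro h
            have := (mem_filter.1 h).2
            have := (mem_filter.1 hcNeg).2
            omega
          have hsum : (insert c Pos).sum id = Pos.sum id + c := by
            rw [Finset.sum_insert hcPos]; simp; ring
          rw [← hsum]
          apply sigma_mem_intro
          · intro x hx
            rcases Finset.mem_insert.1 hx with rfl | hx
            · exact (mem_filter.1 hcNeg).1
            · exact (filter_subset _ _) hx
          · rw [Finset.card_insert_of_notMem hcPos, hpos]
            omega
      have hcardhighs : highs.card = n := by
        rw [hhighs]
        rw [Finset.card_insert_of_notMem, Finset.card_image_of_injective _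
          (fun x y h => by omega)]
        · rw [Finset.card_erase_of_mem haNeg, hneg]; omega
        · intro h
          obtain ⟨c, hc, hce⟩ := mem_image.1 h
          have := (mem_filter.1 ((Finset.erase_subset _ _) hc)).2
          omega
      -- middle inequality : Neg.sum + b ≤ Pos.sum + a
      have hmid : Neg.sum id + b ≤ Pos.sum id + a := by
        have h1 : Neg.sum id - a ≤ 0 := by
          rw [← hNegsum_a]
          exact Finset.sum_nonpos (fun i hi =>
            le_of_lt (mem_filter.1 ((Finset.erase_subset _ _) hi)).2)
        have h2 : (0:ℤ) ≤ Pos.sum id - b := by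
          rw [← hPossum_b]
          exact Finset.sum_nonneg (fun i hi =>
            le_of_lt (mem_filter.1 ((Finset.erase_subset _ _) hi)).2)
        omega
      -- disjointness
      have hd1 : Disjoint lows (T ∪ highs) := by
        rw [Finset.disjoint_left]
        intro x hx hx'
        have h1 := hlows_lt x hx
        rcases Finset.mem_union.1 hx' with h | h
        · have := (hTbound x h).1; omega
        · have := hhighs_gt x h; omega
      have hd2 : Disjoint T highs := by
        rw [Finset.disjoint_left]
        intro x hx hx'
        have := (hTbound x hx).2
        have := hhighs_gt x hx'
        omega
      have hsub : lows ∪ (T ∪ highs) ⊆ sigmaAtLeast A α :=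
        Finset.union_subset hlows_mem (Finset.union_subset hT_mem hhighs_mem)
      have hcardT : T.card = (sigmaAtLeast A' (α-1)).card :=
        Finset.card_image_of_injective _ (fun x y h => by omega)
      have hfinal : lows.card + (T.card + highs.card) ≤ (sigmaAtLeast A α).card := by
        rw [← Finset.card_union_of_disjoint hd2, ← Finset.card_union_of_disjoint hd1]
        exact Finset.card_le_card hsub
      obtain ⟨m, rfl⟩ : ∃ m, n = m + 1 := ⟨n - 1, by omega⟩
      obtain ⟨q, rfl⟩ : ∃ q, p = q + 1 := ⟨p - 1, by omega⟩
      simp only [Nat.add_sub_cancel] at IH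
      have g1 : (m+1)*(m+1+1) = m*(m+1) + 2*(m+1) := by ring
      have g2 : (q+1)*(q+1+1) = q*(q+1) + 2*(q+1) := by ring
      linarith [hfinal, IH, hcardlows, hcardhighs, hcardT]

theorem stmt_7 (n p α : ℕ) (hn : 1 ≤ n) (hp : 1 ≤ p) (A : Finset ℤ)
    (hneg : (A.filter (fun x => x < 0)).card = n)
    (hpos : (A.filter (fun x => 0 < x)).card = p)
    (h0 : (0 : ℤ) ∈ A)
    (hα : α ≤ n + p + 1) (hαn : α ≤ n) (hαp : α ≤ p) :
    ((sigmaAtLeast A α).card : ℤ) ≥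
      (n : ℤ) * ((n : ℤ) + 1) / 2 + (p : ℤ) * ((p : ℤ) + 1) / 2 + 1 := by
  have h := main_bound (n+p) n p α A le_rfl hneg hpos h0 hαn hαp
  have h' : (n:ℤ)*((n:ℤ)+1) + (p:ℤ)*((p:ℤ)+1) + 2 ≤ 2 * ((sigmaAtLeast A α).card : ℤ) := by
    exact_mod_cast h
  obtain ⟨m, hm⟩ := Int.even_mul_succ_self (n:ℤ)
  obtain ⟨q, hq⟩ := Int.even_mul_succ_self (p:ℤ)
  rw [hm, hq] at h' ⊢
  have h1 : (m + m) / 2 = m := by omega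
  have h2 : (q + q) / 2 = q := by omega
  rw [h1, h2]
  omega
end

section
/- Let n and p be positive integers and let A be a finite set of integers consisting of exactly n negative integers, exactly p positive integers, and 0. If α is an integer with 0 ≤ α ≤ n + p + 1, α ≤ n, and α > p, then |Σ_α(A)| ≥ n(n+1)/2 + p(p+1)/2 − (α−p)(α−p−1)/2 + 1. -/
lemma card_ge_of_chain {S : Finset ℤ} {l : List ℤ} (hc : l.Chain' (· < ·))
    (hm : ∀ x ∈ l, x ∈ S) : l.length ≤ S.card := by
  have hpw : l.Pairwise (· < ·) := List.isChain_iff_pairwise.mp hc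
  have hnd : l.Nodup := hpw.nodup
  calc l.length = l.toFinset.card := (List.toFinset_card_of_nodup hnd).symm
    _ ≤ S.card := Finset.card_le_card (fun x hx => hm x (List.mem_toFinset.mp hx))

lemma getLast?_range {N : ℕ} (h : 0 < N) : (List.range N).getLast? = some (N-1) := by
  cases N with
  | zero => omega
  | succ N => rw [List.range_succ]; simp

lemma head?_map_range (g : ℕ → ℤ) {N : ℕ} (h : 0 < N) :
    ((List.range N).map g).head? = some (g 0) := by
  cases N with
  | zero => omega
  | succ N => rw [List.range_succ_eq_map]; simp

lemma getLast?_map_range (g : ℕ → ℤ) {N : ℕ} (h : 0 < N) :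
    ((List.range N).map g).getLast? = some (g (N-1)) := by
  rw [List.getLast?_map, getLast?_range h]; rfl

/-- chain/head/last facts for a flatMap over `List.range N`. -/
lemma chain_bind_range (B : ℕ → List ℤ) (N : ℕ)
    (hne : ∀ d, d < N → B d ≠ [])
    (hch : ∀ d, d < N → (B d).Chain' (· < ·))
    (hglue : ∀ d, d + 1 < N → ∀ x ∈ (B d).getLast?, ∀ y ∈ (B (d+1)).head?, x < y) :
    ((List.range N).flatMap B).Chain' (· < ·) ∧
      (0 < N → ((List.range N).flatMap B).head? = (B 0).head?
        ∧ ((List.range N).flatMap B).getLast? = (B (N-1)).getLast?) := by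
  induction N with
  | zero => simp [List.Chain']
  | succ N ih =>
    have hbind : (List.range (N+1)).flatMap B = (List.range N).flatMap B ++ B N := by
      rw [List.range_succ, List.flatMap_append]; simp
    obtain ⟨ih1, ih2⟩ := ih (fun d hd => hne d (by omega)) (fun d hd => hch d (by omega))
      (fun d hd => hglue d (by omega))
    rcases Nat.eq_zero_or_pos N with hN | hN
    · subst hN
      constructor
      · rw [hbind]; simpa using hch 0 (by omega)
      · intro _; rw [hbind]; simp
    constructor
    · rw [hbind]; unfold List.Chain'; rw [List.isChain_append]
      refine ⟨ih1, hch N (by omega), ?_⟩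
      intro x hx y hy
      refine hglue (N-1) (by omega) x ?_ y ?_
      · rw [← (ih2 hN).2]; exact hx
      · have : N - 1 + 1 = N := by omega
        rw [this]; exact hy
    · intro _
      constructor
      · rw [hbind, List.head?_append, (ih2 hN).1]
        have : (B 0).head? ≠ none := by
          simpa [List.head?_eq_none_iff] using hne 0 (by omega)
        cases h0 : (B 0).head? with
        | none => exact absurd h0 this
        | some v => simp
      · rw [hbind, List.getLast?_append]
        have : (B N).getLast? ≠ none := by
          simpa [List.getLast?_eq_none_iff] using hne N (by omega)
        cases h0 : (B N).getLast? with
        | none => exact absurd h0 this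
        | some v => simp [h0]

lemma length_bind_range (B : ℕ → List ℤ) (N : ℕ) :
    ((List.range N).flatMap B).length = ∑ d ∈ Finset.range N, (B d).length := by
  induction N with
  | zero => simp
  | succ N ih =>
    rw [List.range_succ, List.flatMap_append, Finset.sum_range_succ, ← ih]
    simp

lemma chain_map_range {g : ℕ → ℤ} {N : ℕ} (h : ∀ i, i + 1 < N → g i < g (i+1)) :
    ((List.range N).map g).Chain' (· < ·) := by
  unfold List.Chain'; rw [List.isChain_map]
  induction N with
  | zero => simp
  | succ N ih =>
    rw [List.range_succ, List.isChain_append]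
    refine ⟨ih (fun i hi => h i (by omega)), List.isChain_singleton _, ?_⟩
    intro x hx y hy
    simp only [List.head?_cons, Option.mem_def, Option.some.injEq] at hy
    subst hy
    rcases Nat.eq_zero_or_pos N with h0 | h0
    · subst h0; simp at hx
    · rw [getLast?_range h0] at hx
      simp only [Option.mem_def, Option.some.injEq] at hx
      subst hx
      have := h (N-1) (by omega)
      have hN : N - 1 + 1 = N := by omega
      rwa [hN] at this

namespace Stmt8

def TT (a : ℕ → ℤ) (k : ℕ) : ℤ := ∑ i ∈ Finset.range k, a i
def QQ (b : ℕ → ℤ) (p u : ℕ) : ℤ := ∑ j ∈ Finset.Ico (p-u) p, b j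
def RR (a : ℕ → ℤ) (n β s : ℕ) : ℤ := ∑ i ∈ Finset.Ico (n+2+s-β) n, a i
def SB (b : ℕ → ℤ) (p : ℕ) : ℤ := ∑ j ∈ Finset.range p, b j

def P0 (a b : ℕ → ℤ) (n p : ℕ) : List ℤ :=
  TT a n :: (List.range p).flatMap
    (fun u => (List.range (p-u)).map (fun i => TT a n + QQ b p u + b i))

def P1 (a b : ℕ → ℤ) (n p β : ℕ) : List ℤ :=
  (List.range (n+1-max β 2)).flatMap
    (fun d => (List.range (d+2)).map (fun t => SB b p + TT a (n-2-d) + a (n-2-d+t)))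

def P2 (a b : ℕ → ℤ) (n p β : ℕ) : List ℤ :=
  (List.range (β-2)).flatMap
    (fun e => (List.range (n+1-β)).map
      (fun t => SB b p + TT a (β-3-e) + RR a n β (β-3-e) + a (β-3-e+1+t)))

def LL (a b : ℕ → ℤ) (n p β : ℕ) : List ℤ :=
  P0 a b n p ++ P1 a b n p β ++ (if β < 2 then [SB b p] else P2 a b n p β)

section
variable (a b : ℕ → ℤ) (n p β : ℕ)

lemma TT_succ (k : ℕ) : TT a (k+1) = TT a k + a k := Finset.sum_range_succ _ _

lemma QQ_zero : QQ b p 0 = 0 := by simp [QQ]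

lemma QQ_succ {u : ℕ} (h : u < p) : QQ b p (u+1) = b (p-u-1) + QQ b p u := by
  have h1 : p - (u+1) = p-u-1 := by omega
  have h2 : p-u-1+1 = p-u := by omega
  calc QQ b p (u+1) = ∑ j ∈ Finset.Ico (p-u-1) p, b j := by rw [QQ, h1]
    _ = ∑ j ∈ insert (p-u-1) (Finset.Ico (p-u-1+1) p), b j := by
        rw [← Finset.insert_Ico_add_one_left_eq_Ico (by omega)]
    _ = b (p-u-1) + ∑ j ∈ Finset.Ico (p-u-1+1) p, b j := by
        rw [Finset.sum_insert (by simp [Finset.mem_Ico])]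
    _ = b (p-u-1) + QQ b p u := by rw [h2, QQ]

lemma QQ_p : QQ b p p = SB b p := by
  rw [QQ, SB, Nat.sub_self, Finset.range_eq_Ico]

lemma RR_eq {s : ℕ} (h : s + 2 < β) (hβn : β ≤ n) :
    RR a n β s = a (n+2+s-β) + RR a n β (s+1) := by
  have h1 : n+2+s-β < n := by omega
  have h2 : (n+2+s-β)+1 = n+2+(s+1)-β := by omega
  calc RR a n β s = ∑ i ∈ insert (n+2+s-β) (Finset.Ico (n+2+s-β+1) n), a i := by
        rw [RR, ← Finset.insert_Ico_add_one_left_eq_Ico h1]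
    _ = a (n+2+s-β) + ∑ i ∈ Finset.Ico (n+2+s-β+1) n, a i := by
        rw [Finset.sum_insert (by simp [Finset.mem_Ico])]
    _ = a (n+2+s-β) + RR a n β (s+1) := by rw [h2, RR]

lemma RR_top (hβ3 : 3 ≤ β) (hβn : β ≤ n) : RR a n β (β-3) = a (n-1) := by
  have h1 : n+2+(β-3)-β = n-1 := by omega
  have h2 : 0 < n := by omega
  rw [RR, h1, Nat.Ico_pred_singleton h2, Finset.sum_singleton]


variable {a b} {n p β}

lemma chainP0 (hp : 1 ≤ p)
    (bmono : ∀ i j, i < j → j < p → b i < b j)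
    (bpos : ∀ j, j < p → 0 < b j) :
    (P0 a b n p).Chain' (· < ·) ∧
      (P0 a b n p).getLast? = some (TT a n + QQ b p (p-1) + b 0) := by
  set B : ℕ → List ℤ :=
    fun u => (List.range (p-u)).map (fun i => TT a n + QQ b p u + b i) with hBdef
  have hne : ∀ d, d < p → B d ≠ [] := by
    intro d hd
    simp [hBdef, List.map_eq_nil_iff, List.range_eq_nil]
    omega
  have hch : ∀ d, d < p → (B d).Chain' (· < ·) := by
    intro d hd
    apply chain_map_range
    intro i hi
    have := bmono i (i+1) (by omega) (by omega)
    linarith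
  have hglue : ∀ d, d + 1 < p → ∀ x ∈ (B d).getLast?, ∀ y ∈ (B (d+1)).head?, x < y := by
    intro d hd x hx y hy
    rw [hBdef] at hx hy
    rw [getLast?_map_range _ (show 0 < p-d by omega)] at hx
    rw [head?_map_range _ (show 0 < p-(d+1) by omega)] at hy
    simp only [Option.mem_def, Option.some.injEq] at hx hy
    subst hx; subst hy
    rw [QQ_succ b p (show d < p by omega)]
    have hb0 := bpos 0 hp
    have : p - d - 1 = p - (d+1) := by omega
    rw [this]
    linarith
  obtain ⟨hchain, hhl⟩ := chain_bind_range B p hne hch hglue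
  obtain ⟨hhead, hlast⟩ := hhl hp
  constructor
  · rw [P0]; unfold List.Chain'; rw [List.isChain_cons]
    refine ⟨?_, hchain⟩
    intro y hy
    rw [hhead, hBdef, head?_map_range _ (show 0 < p-0 by omega)] at hy
    simp only [Option.mem_def, Option.some.injEq] at hy
    subst hy
    rw [QQ_zero]
    have := bpos 0 hp
    linarith
  · have : P0 a b n p = [TT a n] ++ (List.range p).flatMap B := rfl
    rw [this, List.getLast?_append, hlast, hBdef]
    rw [getLast?_map_range _ (show 0 < p-(p-1) by omega)]
    have h1 : p - (p-1) - 1 = 0 := by omega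
    rw [h1]
    rfl

lemma chainP1 (hn2 : 2 ≤ n) (hβn : β ≤ n - 1)
    (amono : ∀ i j, i < j → j < n → a i < a j)
    (aneg : ∀ i, i < n → a i < 0) :
    (P1 a b n p β).Chain' (· < ·) ∧
      (P1 a b n p β).head? = some (SB b p + TT a (n-2) + a (n-2)) ∧
      (P1 a b n p β).getLast? = some (SB b p + TT a (max β 2 - 2) + a (n-1)) := by
  set N1 := n + 1 - max β 2 with hN1
  have hN1pos : 0 < N1 := by
    have : max β 2 ≤ n := by omega
    omega
  have hdub : ∀ d, d < N1 → d ≤ n - 2 := by intro d hd; omega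
  set B : ℕ → List ℤ :=
    fun d => (List.range (d+2)).map (fun t => SB b p + TT a (n-2-d) + a (n-2-d+t)) with hBdef
  have hne : ∀ d, d < N1 → B d ≠ [] := by
    intro d hd
    simp [hBdef, List.map_eq_nil_iff, List.range_eq_nil]
  have hch : ∀ d, d < N1 → (B d).Chain' (· < ·) := by
    intro d hd
    apply chain_map_range
    intro t ht
    have h1 : n-2-d+(t+1) = (n-2-d+t) + 1 := by omega
    rw [h1]
    have := amono (n-2-d+t) (n-2-d+t+1) (by omega) (by omega)
    linarith
  have hglue : ∀ d, d + 1 < N1 → ∀ x ∈ (B d).getLast?, ∀ y ∈ (B (d+1)).head?, x < y := by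
    intro d hd x hx y hy
    rw [hBdef] at hx hy
    rw [getLast?_map_range _ (show 0 < d+2 by omega)] at hx
    rw [head?_map_range _ (show 0 < d+1+2 by omega)] at hy
    simp only [Option.mem_def, Option.some.injEq] at hx hy
    subst hx; subst hy
    have f1 : TT a (n-2-d) = TT a (n-2-(d+1)) + a (n-2-(d+1)) := by
      have e3 : n-2-d = (n-2-(d+1))+1 := by omega
      rw [e3, TT_succ]
    have f2 : a (n-2-d+(d+2-1)) = a (n-1) := by
      have e1 : n-2-d+(d+2-1) = n-1 := by omega
      rw [e1]
    have f3 : a (n-2-(d+1)+0) = a (n-2-(d+1)) := by norm_num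
    have := aneg (n-1) (by omega)
    linarith [f1, f2, f3, this]
  obtain ⟨hchain, hhl⟩ := chain_bind_range B N1 hne hch hglue
  obtain ⟨hhead, hlast⟩ := hhl hN1pos
  refine ⟨hchain, ?_, ?_⟩
  · rw [P1, ← hN1, ← hBdef, hhead, hBdef, head?_map_range _ (show 0 < 0+2 by omega)]
    norm_num
  · rw [P1, ← hN1, ← hBdef, hlast, hBdef, getLast?_map_range _ (show 0 < (N1-1)+2 by omega)]
    have e1 : n-2-(N1-1) = max β 2 - 2 := by omega
    have e2 : n-2-(N1-1)+(N1-1+2-1) = n-1 := by omega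
    rw [e2, e1]

lemma chainP2 (hβ3 : 3 ≤ β) (hβn : β ≤ n - 1)
    (amono : ∀ i j, i < j → j < n → a i < a j) :
    (P2 a b n p β).Chain' (· < ·) ∧
      (P2 a b n p β).head? =
        some (SB b p + TT a (β-3) + RR a n β (β-3) + a (β-2)) ∧
      (P2 a b n p β).getLast? =
        some (SB b p + TT a 0 + RR a n β 0 + a (n+1-β)) := by
  have hn : 4 ≤ n := by omega
  set B : ℕ → List ℤ :=
    fun e => (List.range (n+1-β)).map
      (fun t => SB b p + TT a (β-3-e) + RR a n β (β-3-e) + a (β-3-e+1+t)) with hBdef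
  have hne : ∀ e, e < β-2 → B e ≠ [] := by
    intro e he
    simp [hBdef, List.map_eq_nil_iff, List.range_eq_nil]
    omega
  have hch : ∀ e, e < β-2 → (B e).Chain' (· < ·) := by
    intro e he
    apply chain_map_range
    intro t ht
    have h1 : β-3-e+1+(t+1) = (β-3-e+1+t) + 1 := by omega
    rw [h1]
    have := amono (β-3-e+1+t) (β-3-e+1+t+1) (by omega) (by omega)
    linarith
  have hglue : ∀ e, e + 1 < β-2 → ∀ x ∈ (B e).getLast?, ∀ y ∈ (B (e+1)).head?, x < y := by
    intro e he x hx y hy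
    rw [hBdef] at hx hy
    rw [getLast?_map_range _ (show 0 < n+1-β by omega)] at hx
    rw [head?_map_range _ (show 0 < n+1-β by omega)] at hy
    simp only [Option.mem_def, Option.some.injEq] at hx hy
    subst hx; subst hy
    set s' := β-3-(e+1) with hs'
    have e0 : β-3-e = s'+1 := by omega
    have e1 : s'+1+1+(n+1-β-1) = n+2+s'-β := by omega
    have e2 : s'+1+0 = s'+1 := by omega
    rw [e0, e1, e2, TT_succ, RR_eq a n β (show s'+2 < β by omega) (by omega)]
    have := amono s' (s'+1) (by omega) (by omega)
    linarith
  obtain ⟨hchain, hhl⟩ := chain_bind_range B (β-2) hne hch hglue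
  obtain ⟨hhead, hlast⟩ := hhl (by omega)
  refine ⟨hchain, ?_, ?_⟩
  · rw [P2, ← hBdef, hhead, hBdef, head?_map_range _ (show 0 < n+1-β by omega)]
    have e1 : β-3-0 = β-3 := by omega
    have e2 : β-3-0+1+0 = β-2 := by omega
    rw [e2, e1]
  · rw [P2, ← hBdef, hlast, hBdef, getLast?_map_range _ (show 0 < n+1-β by omega)]
    have e1 : β-3-(β-2-1) = 0 := by omega
    have e2 : β-3-(β-2-1)+1+(n+1-β-1) = n+1-β := by omega
    rw [e2, e1]

lemma chainLL (hn2 : 2 ≤ n) (hp : 1 ≤ p) (hβ1 : 1 ≤ β) (hβn : β ≤ n - 1)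
    (amono : ∀ i j, i < j → j < n → a i < a j)
    (aneg : ∀ i, i < n → a i < 0)
    (bmono : ∀ i j, i < j → j < p → b i < b j)
    (bpos : ∀ j, j < p → 0 < b j) :
    (LL a b n p β).Chain' (· < ·) := by
  obtain ⟨hc0, hl0⟩ := chainP0 hp bmono bpos (a := a) (n := n)
  obtain ⟨hc1, hh1, hl1⟩ := chainP1 hn2 hβn amono aneg (b := b) (p := p)
  have hglue01 : ∀ x ∈ (P0 a b n p).getLast?, ∀ y ∈ (P1 a b n p β).head?, x < y := by
    intro x hx y hy
    rw [hl0] at hx; rw [hh1] at hy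
    simp only [Option.mem_def, Option.some.injEq] at hx hy
    subst hx; subst hy
    have f1 := QQ_succ b p (show p-1 < p by omega)
    rw [show p-1+1 = p by omega, show p-(p-1)-1 = 0 by omega, QQ_p] at f1
    have f2 : TT a n = TT a (n-2) + a (n-2) + a (n-1) := by
      have e1 : n = (n-2)+1+1 := by omega
      have e2 : n-2+1 = n-1 := by omega
      conv_lhs => rw [e1]
      rw [TT_succ, TT_succ, e2]
    have := aneg (n-1) (by omega)
    linarith
  have hchain01 : ((P0 a b n p) ++ (P1 a b n p β)).Chain' (· < ·) :=
    List.isChain_append.mpr ⟨hc0, hc1, hglue01⟩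
  have hlast01 : ((P0 a b n p) ++ (P1 a b n p β)).getLast?
      = some (SB b p + TT a (max β 2 - 2) + a (n-1)) := by
    rw [List.getLast?_append, hl1]; rfl
  rw [LL]; unfold List.Chain'; rw [List.isChain_append]
  refine ⟨hchain01, ?_, ?_⟩
  · by_cases hβ2 : β < 2
    · rw [if_pos hβ2]; exact List.isChain_singleton _
    rw [if_neg hβ2]
    by_cases hβ3 : 3 ≤ β
    · exact (chainP2 hβ3 hβn amono (b := b) (p := p)).1
    · have : β - 2 = 0 := by omega
      rw [P2, this]
      simp
  · intro x hx y hy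
    rw [hlast01] at hx
    simp only [Option.mem_def, Option.some.injEq] at hx
    subst hx
    by_cases hβ2 : β < 2
    · rw [if_pos hβ2] at hy
      simp only [List.head?_cons, Option.mem_def, Option.some.injEq] at hy
      subst hy
      have e1 : max β 2 - 2 = 0 := by omega
      rw [e1, TT]
      have := aneg (n-1) (by omega)
      simp only [Finset.range_zero, Finset.sum_empty]
      linarith
    rw [if_neg hβ2] at hy
    by_cases hβ3 : 3 ≤ β
    · obtain ⟨_, hh2, _⟩ := chainP2 hβ3 hβn amono (b := b) (p := p)
      rw [hh2] at hy
      simp only [Option.mem_def, Option.some.injEq] at hy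
      subst hy
      have e1 : max β 2 - 2 = β - 2 := by omega
      have f1 : TT a (β-2) = TT a (β-3) + a (β-3) := by
        have e2 : β-2 = (β-3)+1 := by omega
        rw [e2, TT_succ]
      rw [e1, RR_top a n β hβ3 (by omega), f1]
      have := amono (β-3) (β-2) (by omega) (by omega)
      linarith
    · exfalso
      have hβeq : β = 2 := by omega
      rw [P2, hβeq] at hy
      simp at hy

lemma length_bind_range' (B : ℕ → List ℤ) (N : ℕ) :
    ((List.range N).flatMap B).length = ∑ d ∈ Finset.range N, (B d).length := by
  induction N with
  | zero => simp
  | succ N ih =>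
    rw [List.range_succ, List.flatMap_append, Finset.sum_range_succ, ← ih]
    simp

lemma gauss1 (m : ℕ) : 2 * (∑ u ∈ Finset.range m, (m-u)) = m*(m+1) := by
  have h1 : ∑ u ∈ Finset.range m, (m-u) = ∑ u ∈ Finset.range m, (u+1) := by
    rw [← Finset.sum_range_reflect (fun j => j + 1) m]
    exact Finset.sum_congr rfl (fun u hu => by
      simp only [Finset.mem_range] at hu; omega)
  rw [h1, Finset.sum_add_distrib, Finset.sum_const, Finset.card_range, smul_eq_mul, mul_one]
  have h2 := Finset.sum_range_id_mul_two m
  cases m with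
  | zero => simp
  | succ k =>
    simp only [Nat.succ_sub_one] at h2
    have : 2 * (∑ u ∈ Finset.range (k+1), u + (k+1)) = (∑ u ∈ Finset.range (k+1), u) * 2 + 2*(k+1) := by ring
    rw [this, h2]; ring

lemma gauss2 (N : ℕ) : 2 * (∑ d ∈ Finset.range N, (d+2)) = N*(N+3) := by
  rw [Finset.sum_add_distrib, Finset.sum_const, Finset.card_range, smul_eq_mul]
  have h2 := Finset.sum_range_id_mul_two N
  cases N with
  | zero => simp
  | succ k =>
    simp only [Nat.succ_sub_one] at h2
    have : 2 * (∑ u ∈ Finset.range (k+1), u + (k+1)*2) = (∑ u ∈ Finset.range (k+1), u) * 2 + 4*(k+1) := by ring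
    rw [this, h2]; ring

lemma lenLL (hn2 : 2 ≤ n) (hp : 1 ≤ p) (hβ1 : 1 ≤ β) (hβn : β ≤ n - 1) :
    2 * (LL a b n p β).length + β * (β-1) = n*(n+1) + p*(p+1) + 2 := by
  have l0 : (P0 a b n p).length = 1 + ∑ u ∈ Finset.range p, (p-u) := by
    rw [P0, List.length_cons, length_bind_range']
    simp [Nat.add_comm]
  have l1 : (P1 a b n p β).length = ∑ d ∈ Finset.range (n+1-max β 2), (d+2) := by
    rw [P1, length_bind_range']
    simp
  have hA0 := gauss1 p
  have hA1 := gauss2 (n+1-max β 2)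
  rw [LL, List.length_append, List.length_append, l0, l1]
  set S0 := ∑ u ∈ Finset.range p, (p-u) with hS0
  set X := ∑ d ∈ Finset.range (n+1-max β 2), (d+2) with hX
  by_cases hβ2 : β < 2
  · have hβe : β = 1 := by omega
    subst hβe
    rw [if_pos (by omega)]
    simp only [List.length_singleton]
    have e : n+1-max 1 2 = n-1 := by
      rw [Nat.max_eq_right (by norm_num : (1:ℕ) ≤ 2)]
      omega
    rw [e] at hA1
    obtain ⟨m, rfl⟩ : ∃ m, n = m + 2 := ⟨n-2, by omega⟩
    have e2 : m+2-1 = m+1 := by omega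
    rw [e2] at hA1
    have ez : (1:ℕ) - 1 = 0 := rfl
    rw [ez]
    linarith
  · rw [if_neg hβ2]
    have l2 : (P2 a b n p β).length = (β-2) * (n+1-β) := by
      rw [P2, length_bind_range']
      simp [Finset.sum_const, Finset.card_range]
    rw [l2]
    obtain ⟨c, rfl⟩ : ∃ c, β = c + 2 := ⟨β-2, by omega⟩
    obtain ⟨w, rfl⟩ : ∃ w, n = w + c + 3 := ⟨n-c-3, by omega⟩
    have e : w+c+3+1-max (c+2) 2 = w+2 := by
      rw [Nat.max_eq_left (by omega)]
      omega
    rw [e] at hA1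
    have e1 : w+c+3+1-(c+2) = w+2 := by omega
    have e2 : c+2-2 = c := by omega
    have e3 : c+2-1 = c+1 := by omega
    rw [e1, e2, e3]
    linarith


lemma mem_sig (A : Finset ℤ) (α : ℕ) {n p : ℕ} {a b : ℕ → ℤ}
    (amono : ∀ i j, i < j → j < n → a i < a j)
    (aneg : ∀ i, i < n → a i < 0)
    (amem : ∀ i, i < n → a i ∈ A)
    (bmono : ∀ i j, i < j → j < p → b i < b j)
    (bpos : ∀ j, j < p → 0 < b j)
    (bmem : ∀ j, j < p → b j ∈ A)
    (h0 : (0:ℤ) ∈ A)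
    (I J : Finset ℕ) (hI : I ⊆ Finset.range n) (hJ : J ⊆ Finset.range p)
    (hcard : α ≤ I.card + J.card + 1) :
    (∑ i ∈ I, a i) + (∑ j ∈ J, b j) ∈ sigmaAtLeast A α := by
  have hIa : ∀ i ∈ I, i < n := fun i hi => Finset.mem_range.mp (hI hi)
  have hJb : ∀ j ∈ J, j < p := fun j hj => Finset.mem_range.mp (hJ hj)
  have hainj : Set.InjOn a I := by
    intro i hi j hj hij
    by_contra hne
    rcases Nat.lt_or_ge i j with h | h
    · exact absurd hij (ne_of_lt (amono i j h (hIa j hj)))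
    · have : j < i := by omega
      exact absurd hij.symm (ne_of_lt (amono j i this (hIa i hi)))
  have hbinj : Set.InjOn b J := by
    intro i hi j hj hij
    by_contra hne
    rcases Nat.lt_or_ge i j with h | h
    · exact absurd hij (ne_of_lt (bmono i j h (hJb j hj)))
    · have : j < i := by omega
      exact absurd hij.symm (ne_of_lt (bmono j i this (hJb i hi)))
  set NI := I.image a with hNI
  set PJ := J.image b with hPJ
  have hNIneg : ∀ x ∈ NI, x < 0 := by
    intro x hx; obtain ⟨i, hi, rfl⟩ := Finset.mem_image.mp hx
    exact aneg i (hIa i hi)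
  have hPJpos : ∀ x ∈ PJ, 0 < x := by
    intro x hx; obtain ⟨j, hj, rfl⟩ := Finset.mem_image.mp hx
    exact bpos j (hJb j hj)
  have hdisj : Disjoint NI PJ := by
    rw [Finset.disjoint_left]
    intro x hx hx'
    exact absurd (hPJpos x hx') (not_lt.mpr (hNIneg x hx).le)
  have h0nin : (0:ℤ) ∉ NI ∪ PJ := by
    intro h
    rcases Finset.mem_union.mp h with h | h
    · exact absurd (hNIneg 0 h) (lt_irrefl 0)
    · exact absurd (hPJpos 0 h) (lt_irrefl 0)
  set B : Finset ℤ := insert 0 (NI ∪ PJ) with hB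
  have hBsub : B ⊆ A := by
    intro x hx
    rcases Finset.mem_insert.mp hx with rfl | hx
    · exact h0
    rcases Finset.mem_union.mp hx with h | h
    · obtain ⟨i, hi, rfl⟩ := Finset.mem_image.mp h; exact amem i (hIa i hi)
    · obtain ⟨j, hj, rfl⟩ := Finset.mem_image.mp h; exact bmem j (hJb j hj)
  have hBcard : B.card = I.card + J.card + 1 := by
    rw [hB, Finset.card_insert_of_notMem h0nin, Finset.card_union_of_disjoint hdisj,
      Finset.card_image_of_injOn hainj, Finset.card_image_of_injOn hbinj]
  have hBsum : B.sum id = (∑ i ∈ I, a i) + (∑ j ∈ J, b j) := by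
    rw [hB, Finset.sum_insert h0nin, Finset.sum_union hdisj,
      Finset.sum_image (fun i hi j hj h => hainj hi hj h),
      Finset.sum_image (fun i hi j hj h => hbinj hi hj h)]
    simp
  unfold sigmaAtLeast
  rw [Finset.mem_image]
  exact ⟨B, Finset.mem_filter.mpr ⟨Finset.mem_powerset.mpr hBsub, by omega⟩, hBsum⟩

lemma memLL (A : Finset ℤ) (α : ℕ)
    (hn2 : 2 ≤ n) (hp : 1 ≤ p) (hβ1 : 1 ≤ β) (hβn : β ≤ n - 1)
    (hαβ : α = p + β) (hαn : α ≤ n)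
    (amono : ∀ i j, i < j → j < n → a i < a j)
    (aneg : ∀ i, i < n → a i < 0)
    (amem : ∀ i, i < n → a i ∈ A)
    (bmono : ∀ i j, i < j → j < p → b i < b j)
    (bpos : ∀ j, j < p → 0 < b j)
    (bmem : ∀ j, j < p → b j ∈ A)
    (h0 : (0:ℤ) ∈ A) :
    ∀ x ∈ LL a b n p β, x ∈ sigmaAtLeast A α := by
  intro x hx
  rw [LL] at hx
  simp only [List.mem_append] at hx
  rcases hx with (hx | hx) | hx
  · -- P0
    rw [P0, List.mem_cons] at hx
    rcases hx with rfl | hx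
    · have h := mem_sig A α amono aneg amem bmono bpos bmem h0
        (Finset.range n) ∅ (by simp) (by simp) (by simp [Finset.card_range]; omega)
      simpa [TT] using h
    · simp only [List.mem_flatMap, List.mem_map, List.mem_range] at hx
      obtain ⟨u, hu, i, hi, rfl⟩ := hx
      have hnotmem : i ∉ Finset.Ico (p-u) p := by
        simp only [Finset.mem_Ico]; omega
      have h := mem_sig A α amono aneg amem bmono bpos bmem h0
        (Finset.range n) (insert i (Finset.Ico (p-u) p))
        (by simp)
        (by intro j hj
            rcases Finset.mem_insert.mp hj with rfl | hj
            · simp only [Finset.mem_range]; omega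
            · simp only [Finset.mem_Ico] at hj; simp only [Finset.mem_range]; omega)
        (by rw [Finset.card_insert_of_notMem hnotmem, Finset.card_range, Nat.card_Ico]; omega)
      rw [Finset.sum_insert hnotmem] at h
      have heq : TT a n + QQ b p u + b i
          = (∑ i ∈ Finset.range n, a i) + (b i + ∑ j ∈ Finset.Ico (p-u) p, b j) := by
        rw [TT, QQ]; ring
      rwa [heq]
  · -- P1
    rw [P1] at hx
    simp only [List.mem_flatMap, List.mem_map, List.mem_range] at hx
    obtain ⟨d, hd, t, ht, rfl⟩ := hx
    have hd' : d ≤ n - max β 2 := by omega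
    have hnotmem : n-2-d+t ∉ Finset.range (n-2-d) := by
      simp only [Finset.mem_range]; omega
    have h := mem_sig A α amono aneg amem bmono bpos bmem h0
      (insert (n-2-d+t) (Finset.range (n-2-d))) (Finset.range p)
      (by intro i hi
          rcases Finset.mem_insert.mp hi with rfl | hi
          · simp only [Finset.mem_range]; omega
          · simp only [Finset.mem_range] at hi ⊢; omega)
      (by simp)
      (by rw [Finset.card_insert_of_notMem hnotmem, Finset.card_range, Finset.card_range]
          omega)
    rw [Finset.sum_insert hnotmem] at h
    have heq : SB b p + TT a (n-2-d) + a (n-2-d+t)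
        = (a (n-2-d+t) + ∑ i ∈ Finset.range (n-2-d), a i) + ∑ j ∈ Finset.range p, b j := by
      rw [SB, TT]; ring
    rwa [heq]
  · -- tail
    by_cases hβ2 : β < 2
    · rw [if_pos hβ2] at hx
      simp only [List.mem_singleton] at hx
      subst hx
      have h := mem_sig A α amono aneg amem bmono bpos bmem h0
        ∅ (Finset.range p) (by simp) (by simp) (by simp [Finset.card_range]; omega)
      simpa [SB] using h
    · rw [if_neg hβ2, P2] at hx
      simp only [List.mem_flatMap, List.mem_map, List.mem_range] at hx
      obtain ⟨e, he, t, ht, rfl⟩ := hx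
      have hβ3 : 3 ≤ β := by omega
      set s := β-3-e with hs
      have hsle : s ≤ β-3 := by omega
      have hdisj : Disjoint (Finset.range s) (Finset.Ico (n+2+s-β) n) := by
        rw [Finset.disjoint_left]
        intro x hx hx'
        simp only [Finset.mem_range] at hx
        simp only [Finset.mem_Ico] at hx'
        omega
      have hnotmem : s+1+t ∉ Finset.range s ∪ Finset.Ico (n+2+s-β) n := by
        simp only [Finset.mem_union, Finset.mem_range, Finset.mem_Ico]
        omega
      have h := mem_sig A α amono aneg amem bmono bpos bmem h0
        (insert (s+1+t) (Finset.range s ∪ Finset.Ico (n+2+s-β) n)) (Finset.range p)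
        (by intro i hi
            rcases Finset.mem_insert.mp hi with rfl | hi
            · simp only [Finset.mem_range]; omega
            · rcases Finset.mem_union.mp hi with hi | hi
              · simp only [Finset.mem_range] at hi ⊢; omega
              · simp only [Finset.mem_Ico] at hi; simp only [Finset.mem_range]; omega)
        (by simp)
        (by rw [Finset.card_insert_of_notMem hnotmem, Finset.card_union_of_disjoint hdisj,
              Finset.card_range, Finset.card_range, Nat.card_Ico]
            omega)
      rw [Finset.sum_insert hnotmem, Finset.sum_union hdisj] at h
      have heq : SB b p + TT a s + RR a n β s + a (s+1+t)
          = (a (s+1+t) + ((∑ i ∈ Finset.range s, a i) + ∑ i ∈ Finset.Ico (n+2+s-β) n, a i))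
            + ∑ j ∈ Finset.range p, b j := by
        rw [SB, TT, RR]; ring
      rwa [heq]
end
end Stmt8

open Stmt8 in
theorem stmt_8 (n p α : ℕ) (hn : 1 ≤ n) (hp : 1 ≤ p) (A : Finset ℤ)
    (hneg : (A.filter (fun x => x < 0)).card = n)
    (hpos : (A.filter (fun x => 0 < x)).card = p)
    (h0 : (0 : ℤ) ∈ A)
    (hα : α ≤ n + p + 1) (hαn : α ≤ n) (hαp : p < α) :
    ((sigmaAtLeast A α).card : ℤ) ≥
      (n : ℤ) * ((n : ℤ) + 1) / 2 + (p : ℤ) * ((p : ℤ) + 1) / 2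
        - ((α : ℤ) - (p : ℤ)) * ((α : ℤ) - (p : ℤ) - 1) / 2 + 1 := by
  classical
  -- enumerations
  set Aneg := A.filter (fun x => x < 0) with hAneg
  set Apos := A.filter (fun x => 0 < x) with hApos
  let ea := Aneg.orderIsoOfFin hneg
  let eb := Apos.orderIsoOfFin hpos
  set a : ℕ → ℤ := fun i => if h : i < n then (ea ⟨i, h⟩ : ℤ) else 0 with ha
  set b : ℕ → ℤ := fun j => if h : j < p then (eb ⟨j, h⟩ : ℤ) else 0 with hb
  have amono : ∀ i j, i < j → j < n → a i < a j := by
    intro i j hij hj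
    have hi : i < n := by omega
    rw [ha]
    simp only [dif_pos hi, dif_pos hj]
    exact_mod_cast ea.strictMono (show (⟨i, hi⟩ : Fin n) < ⟨j, hj⟩ from hij)
  have amemf : ∀ i, i < n → a i ∈ Aneg := by
    intro i hi
    rw [ha]; simp only [dif_pos hi]
    exact (ea ⟨i, hi⟩).2
  have aneg : ∀ i, i < n → a i < 0 := by
    intro i hi
    have := amemf i hi
    rw [hAneg, Finset.mem_filter] at this
    exact this.2
  have amem : ∀ i, i < n → a i ∈ A := by
    intro i hi
    have := amemf i hi
    rw [hAneg, Finset.mem_filter] at this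
    exact this.1
  have bmono : ∀ i j, i < j → j < p → b i < b j := by
    intro i j hij hj
    have hi : i < p := by omega
    rw [hb]
    simp only [dif_pos hi, dif_pos hj]
    exact_mod_cast eb.strictMono (show (⟨i, hi⟩ : Fin p) < ⟨j, hj⟩ from hij)
  have bmemf : ∀ j, j < p → b j ∈ Apos := by
    intro j hj
    rw [hb]; simp only [dif_pos hj]
    exact (eb ⟨j, hj⟩).2
  have bpos : ∀ j, j < p → 0 < b j := by
    intro j hj
    have := bmemf j hj
    rw [hApos, Finset.mem_filter] at this
    exact this.2
  have bmem : ∀ j, j < p → b j ∈ A := by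
    intro j hj
    have := bmemf j hj
    rw [hApos, Finset.mem_filter] at this
    exact this.1
  -- parameters
  set β := α - p with hβ
  have hn2 : 2 ≤ n := by omega
  have hβ1 : 1 ≤ β := by omega
  have hβn : β ≤ n - 1 := by omega
  have hαβ : α = p + β := by omega
  -- the chain
  have hchain := chainLL hn2 hp hβ1 hβn amono aneg bmono bpos
  have hmem := memLL A α hn2 hp hβ1 hβn hαβ hαn amono aneg amem bmono bpos bmem h0
  have hlen := lenLL (a := a) (b := b) (p := p) hn2 hp hβ1 hβn
  have hcard : (LL a b n p β).length ≤ (sigmaAtLeast A α).card :=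
    card_ge_of_chain hchain hmem
  -- arithmetic conclusion
  have keyN : n*(n+1) + p*(p+1) + 2 ≤ 2 * (sigmaAtLeast A α).card + β*(β-1) := by
    calc n*(n+1) + p*(p+1) + 2 = 2 * (LL a b n p β).length + β * (β-1) := hlen.symm
      _ ≤ 2 * (sigmaAtLeast A α).card + β*(β-1) := by omega
  have keyZ : (n:ℤ)*((n:ℤ)+1) + (p:ℤ)*((p:ℤ)+1) + 2
      ≤ 2 * ((sigmaAtLeast A α).card : ℤ) + (β:ℤ)*((β:ℤ)-1) := by
    zify [hβ1] at keyN
    linarith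
  have hβc : (β:ℤ) = (α:ℤ) - (p:ℤ) := by
    have h1 : β = α - p := hβ
    omega
  rw [ge_iff_le, ← hβc]
  obtain ⟨k1, hk1⟩ := Int.even_mul_succ_self (n:ℤ)
  obtain ⟨k2, hk2⟩ := Int.even_mul_succ_self (p:ℤ)
  obtain ⟨k3, hk3'⟩ := Int.even_mul_succ_self ((β:ℤ)-1)
  have hk3 : (β:ℤ)*((β:ℤ)-1) = k3 + k3 := by linear_combination hk3'
  have d1 : (k1+k1)/2 = k1 := by omega
  have d2 : (k2+k2)/2 = k2 := by omega
  have d3 : (k3+k3)/2 = k3 := by omega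
  rw [hk1, hk2, hk3, d1, d2, d3]
  linarith [keyZ, hk1, hk2, hk3]
end

section
/- Let n and p be positive integers and let A be a finite set of integers consisting of exactly n negative integers, exactly p positive integers, and 0. If α is an integer with 0 ≤ α ≤ n + p + 1, α > n, and α ≤ p, then |Σ_α(A)| ≥ n(n+1)/2 + p(p+1)/2 − (α−n)(α−n−1)/2 + 1. -/
open Finset

lemma sum_shift (e : ℕ → ℤ) (hmono : Monotone e) (a b : ℕ) :
    ∑ i ∈ Ico a b, e i ≤ ∑ i ∈ Ico (a+1) (b+1), e i := by
  rw [Finset.sum_Ico_eq_sum_range, Finset.sum_Ico_eq_sum_range]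
  have : b + 1 - (a + 1) = b - a := by omega
  rw [this]
  exact Finset.sum_le_sum fun i _ => hmono (by omega)

lemma dominance (e : ℕ → ℤ) (hmono : StrictMono e) (hpos : ∀ i, 0 < e i) :
    ∀ p r (B : Finset ℕ), r ≤ p → B ⊆ range p → B.card ≤ r →
      ∑ i ∈ B, e i ≤ ∑ i ∈ Ico (p - r) p, e i := by
  intro p
  induction p with
  | zero =>
    intro r B hr hB hc
    have : B = ∅ := Finset.subset_empty.mp (by simpa using hB)
    simp [this]
  | succ q ih =>
    intro r B hr hB hc
    by_cases hq : q ∈ B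
    · have hr1 : 1 ≤ r := by
        have := Finset.card_pos.mpr ⟨q, hq⟩; omega
      have hB' : B.erase q ⊆ range q := by
        intro x hx
        have hx' := hB (Finset.erase_subset _ _ hx)
        simp only [Finset.mem_range] at hx' ⊢
        have hxq : x ≠ q := Finset.ne_of_mem_erase hx
        omega
      have hrec := ih (r-1) (B.erase q) (by omega) hB'
        (by rw [Finset.card_erase_of_mem hq]; omega)
      have hsum : ∑ i ∈ B, e i = ∑ i ∈ B.erase q, e i + e q :=
        (Finset.sum_erase_add _ _ hq).symm
      have hsplit : ∑ i ∈ Ico (q + 1 - r) (q+1), e i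
          = ∑ i ∈ Ico (q+1-r) q, e i + e q :=
        Finset.sum_Ico_succ_top (by omega) _
      have heq : q - (r-1) = q + 1 - r := by omega
      rw [heq] at hrec
      rw [hsum, hsplit]
      linarith
    · have hB' : B ⊆ range q := by
        intro x hx
        have := hB hx
        simp only [Finset.mem_range] at this ⊢
        have : x ≠ q := fun h => hq (h ▸ hx)
        omega
      by_cases hrq : r ≤ q
      · have hrec := ih r B hrq hB' hc
        have hshift := sum_shift e hmono.monotone (q - r) q
        have h1 : q - r + 1 = q + 1 - r := by omega
        rw [h1] at hshift
        linarith
      · have hr' : r = q + 1 := by omega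
        have hrec := ih q B le_rfl hB' (le_trans (Finset.card_le_card hB') (by simp))
        have hsplit : ∑ i ∈ Ico 0 (q+1), e i = ∑ i ∈ Ico 0 q, e i + e q :=
          Finset.sum_Ico_succ_top (by omega) _
        have := hpos q
        subst hr'
        have h2 : q + 1 - (q+1) = 0 := by omega
        rw [h2, hsplit]
        rw [Nat.sub_self] at hrec
        linarith

lemma chain (e : ℕ → ℤ) (hmono : StrictMono e) (hpos : ∀ i, 0 < e i) (p : ℕ) :
    ∀ r, r ≤ p → 1 + ∑ i ∈ Ico (p - r) p, (i + 1) ≤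
      (((range p).powerset.filter (fun B => B.card ≤ r)).image
        (fun B => ∑ i ∈ B, e i)).card := by
  intro r
  induction r with
  | zero =>
    intro _
    have h1 : ((range p).powerset.filter (fun B : Finset ℕ => B.card ≤ 0)) = {∅} := by
      ext B
      simp only [Finset.mem_filter, Finset.mem_powerset, Nat.le_zero,
        Finset.card_eq_zero, Finset.mem_singleton]
      exact ⟨fun h => h.2, fun h => ⟨h ▸ Finset.empty_subset _, h⟩⟩
    rw [h1]
    simp
  | succ r ih =>
    intro hr
    have hr' : r ≤ p := by omega
    have ihv := ih hr'
    set Top : ℤ := ∑ i ∈ Ico (p - r) p, e i with hTop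
    set Sold := ((range p).powerset.filter (fun B : Finset ℕ => B.card ≤ r)).image
        (fun B => ∑ i ∈ B, e i) with hSold
    set Snew := ((range p).powerset.filter (fun B : Finset ℕ => B.card ≤ r+1)).image
        (fun B => ∑ i ∈ B, e i) with hSnew
    set Nb := (range (p - r)).image (fun j => e j + Top) with hNb
    have hsub1 : Sold ⊆ Snew := by
      apply Finset.image_subset_image
      intro B hB
      simp only [Finset.mem_filter] at hB ⊢
      exact ⟨hB.1, by omega⟩
    have hsub2 : Nb ⊆ Snew := by
      intro x hx
      simp only [hNb, Finset.mem_image, Finset.mem_range] at hx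
      obtain ⟨j, hj, rfl⟩ := hx
      have hjIco : j ∉ Ico (p - r) p := by
        simp only [Finset.mem_Ico]; omega
      refine Finset.mem_image.mpr ⟨insert j (Ico (p - r) p), ?_, ?_⟩
      · simp only [Finset.mem_filter, Finset.mem_powerset]
        constructor
        · intro x hx
          simp only [Finset.mem_insert, Finset.mem_Ico] at hx
          simp only [Finset.mem_range]
          rcases hx with rfl | hx
          · omega
          · omega
        · rw [Finset.card_insert_of_notMem hjIco, Nat.card_Ico]
          omega
      · rw [Finset.sum_insert hjIco]
    have hold_le : ∀ x ∈ Sold, x ≤ Top := by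
      intro x hx
      simp only [hSold, Finset.mem_image, Finset.mem_filter, Finset.mem_powerset] at hx
      obtain ⟨B, ⟨hB1, hB2⟩, rfl⟩ := hx
      exact dominance e hmono hpos p r B hr' hB1 hB2
    have hnew_gt : ∀ x ∈ Nb, Top < x := by
      intro x hx
      simp only [hNb, Finset.mem_image, Finset.mem_range] at hx
      obtain ⟨j, hj, rfl⟩ := hx
      have := hpos j
      omega
    have hdisj : Disjoint Sold Nb := by
      rw [Finset.disjoint_left]
      intro x hx1 hx2
      exact absurd (hold_le x hx1) (not_le.mpr (hnew_gt x hx2))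
    have hcardNb : Nb.card = p - r := by
      rw [hNb, Finset.card_image_of_injective _ (fun a b hab => hmono.injective (by omega)),
        Finset.card_range]
    have hunion : Sold ∪ Nb ⊆ Snew := Finset.union_subset hsub1 hsub2
    have hcard : Sold.card + (p - r) ≤ Snew.card := by
      have := Finset.card_le_card hunion
      rw [Finset.card_union_of_disjoint hdisj, hcardNb] at this
      exact this
    have hsplit : ∑ i ∈ Ico (p - (r+1)) p, (i + 1)
        = (p - (r+1) + 1) + ∑ i ∈ Ico (p - (r+1) + 1) p, (i+1) :=
      Finset.sum_eq_sum_Ico_succ_bot (by omega) _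
    have h2 : p - (r+1) + 1 = p - r := by omega
    rw [h2] at hsplit
    omega

lemma chain_finset (P : Finset ℤ) (hP : ∀ x ∈ P, 0 < x) (r : ℕ) (hr : r ≤ P.card) :
    1 + ∑ i ∈ Ico (P.card - r) P.card, (i + 1) ≤
      ((P.powerset.filter (fun B => B.card ≤ r)).image (fun B => B.sum id)).card := by
  rcases Nat.eq_zero_or_pos P.card with hp0 | hp0
  · have hr0 : r = 0 := by omega
    subst hr0
    rw [hp0]
    simp only [Nat.sub_zero, Finset.Ico_self, Finset.sum_empty, Nat.add_zero]
    have : (∅ : Finset ℤ) ∈ P.powerset.filter (fun B => B.card ≤ 0) := by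
      simp
    calc 1 ≤ ({(0:ℤ)} : Finset ℤ).card := by simp
      _ ≤ _ := Finset.card_le_card (by
        intro x hx
        simp only [Finset.mem_singleton] at hx
        subst hx
        exact Finset.mem_image.mpr ⟨∅, this, by simp⟩)
  · set p := P.card with hpdef
    have hcard : P.card = p := hpdef.symm
    set f := P.orderEmbOfFin hcard with hf
    have hp1 : 1 ≤ p := hp0
    set e : ℕ → ℤ := fun i =>
      if h : i < p then f ⟨i, h⟩ else f ⟨p - 1, by omega⟩ + (i + 1 - p : ℕ) with he
    have hemem : ∀ i (h : i < p), e i = f ⟨i, h⟩ := by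
      intro i h; simp only [he, dif_pos h]
    have hmono : StrictMono e := by
      intro a b hab
      by_cases ha : a < p
      · by_cases hb : b < p
        · rw [hemem a ha, hemem b hb]
          exact f.strictMono (by exact hab)
        · rw [hemem a ha]
          simp only [he, dif_neg hb]
          have h1 : f ⟨a, ha⟩ ≤ f ⟨p - 1, by omega⟩ := f.monotone (by
            simp only [Fin.mk_le_mk]; omega)
          have h2 : (1 : ℤ) ≤ (b + 1 - p : ℕ) := by
            have : 1 ≤ b + 1 - p := by omega
            exact_mod_cast this
          linarith
      · have hb : ¬ b < p := by omega
        simp only [he, dif_neg ha, dif_neg hb]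
        have : (a + 1 - p : ℕ) < (b + 1 - p : ℕ) := by omega
        have : ((a + 1 - p : ℕ) : ℤ) < ((b + 1 - p : ℕ) : ℤ) := by exact_mod_cast this
        linarith
    have hpos : ∀ i, 0 < e i := by
      intro i
      by_cases h : i < p
      · rw [hemem i h]; exact hP _ (Finset.orderEmbOfFin_mem _ _ _)
      · simp only [he, dif_neg h]
        have h1 : 0 < f ⟨p - 1, by omega⟩ := hP _ (Finset.orderEmbOfFin_mem _ _ _)
        have h2 : (0 : ℤ) ≤ (i + 1 - p : ℕ) := Int.ofNat_nonneg _
        linarith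
    have hchain := chain e hmono hpos p r hr
    refine le_trans hchain (Finset.card_le_card ?_)
    intro x hx
    simp only [Finset.mem_image, Finset.mem_filter, Finset.mem_powerset] at hx ⊢
    obtain ⟨B, ⟨hB1, hB2⟩, rfl⟩ := hx
    refine ⟨B.image e, ⟨?_, ?_⟩, ?_⟩
    · intro y hy
      obtain ⟨i, hi, rfl⟩ := Finset.mem_image.mp hy
      have hip : i < p := Finset.mem_range.mp (hB1 hi)
      rw [hemem i hip]
      exact Finset.orderEmbOfFin_mem _ _ _
    · rw [Finset.card_image_of_injective _ hmono.injective]; exact hB2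
    · rw [Finset.sum_image (fun a _ b _ hab => hmono.injective hab)]
      rfl

lemma neg_card (N : Finset ℤ) (hN : ∀ x ∈ N, x < 0) :
    1 + ∑ i ∈ range N.card, (i + 1) ≤ (N.powerset.image (fun B => B.sum id)).card := by
  set N' := N.image (fun x => -x) with hN'
  have hNpos : ∀ x ∈ N', 0 < x := by
    intro x hx
    obtain ⟨y, hy, rfl⟩ := Finset.mem_image.mp hx
    have := hN y hy; omega
  have hcard : N'.card = N.card :=
    Finset.card_image_of_injective _ neg_injective
  have h1 := chain_finset N' hNpos N.card (le_of_eq hcard.symm)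
  rw [hcard, Nat.sub_self] at h1
  have h2 : N'.powerset.filter (fun B => B.card ≤ N.card) = N'.powerset := by
    apply Finset.filter_true_of_mem
    intro B hB
    calc B.card ≤ N'.card := Finset.card_le_card (Finset.mem_powerset.mp hB)
      _ = N.card := hcard
  rw [h2] at h1
  have h3 : (N'.powerset.image (fun B => B.sum id)).card
      ≤ (N.powerset.image (fun B => B.sum id)).card := by
    rw [← Finset.card_image_of_injective (N'.powerset.image (fun B => B.sum id)) neg_injective]
    apply Finset.card_le_card
    intro x hx
    simp only [Finset.mem_image, Finset.mem_powerset] at hx ⊢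
    obtain ⟨y, ⟨B', hB', rfl⟩, rfl⟩ := hx
    refine ⟨B'.image (fun x => -x), ?_, ?_⟩
    · intro z hz
      obtain ⟨w, hw, rfl⟩ := Finset.mem_image.mp hz
      have := hB' hw
      obtain ⟨u, hu, rfl⟩ := Finset.mem_image.mp (hN' ▸ this)
      simpa using hu
    · rw [Finset.sum_image (fun a _ b _ hab => neg_injective hab)]
      simp only [id]
      exact Finset.sum_neg_distrib (s := B') (f := fun x : ℤ => x)
  calc 1 + ∑ i ∈ range N.card, (i + 1) = 1 + ∑ i ∈ Ico 0 N.card, (i+1) := by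
        rw [Finset.range_eq_Ico]
    _ ≤ _ := le_trans h1 h3

lemma gauss : ∀ k : ℕ, 2 * ∑ i ∈ range k, (i + 1) = k * (k + 1) := by
  intro k
  induction k with
  | zero => simp
  | succ q ih => rw [Finset.sum_range_succ, Nat.mul_add, ih]; ring

theorem stmt_9 (n p α : ℕ) (hn : 1 ≤ n) (hp : 1 ≤ p) (A : Finset ℤ)
    (hneg : (A.filter (fun x => x < 0)).card = n)
    (hpos : (A.filter (fun x => 0 < x)).card = p)
    (h0 : (0 : ℤ) ∈ A)
    (hα : α ≤ n + p + 1) (hαn : n < α) (hαp : α ≤ p) :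
    ((sigmaAtLeast A α).card : ℤ) ≥
      (n : ℤ) * ((n : ℤ) + 1) / 2 + (p : ℤ) * ((p : ℤ) + 1) / 2
        - ((α : ℤ) - (n : ℤ)) * ((α : ℤ) - (n : ℤ) - 1) / 2 + 1 := by
  set N := A.filter (fun x => x < 0) with hNdef
  set P := A.filter (fun x => 0 < x) with hPdef
  have hPpos : ∀ x ∈ P, 0 < x := fun x hx => (Finset.mem_filter.mp hx).2
  have hNneg : ∀ x ∈ N, x < 0 := fun x hx => (Finset.mem_filter.mp hx).2
  have hPsub : P ⊆ A := Finset.filter_subset _ _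
  have hNsub : N ⊆ A := Finset.filter_subset _ _
  have h0P : (0 : ℤ) ∉ P := fun h => lt_irrefl 0 (hPpos 0 h)
  have h0N : (0 : ℤ) ∉ N := fun h => lt_irrefl 0 (hNneg 0 h)
  have hNPdisj : Disjoint N P := by
    rw [Finset.disjoint_left]
    intro x hxN hxP
    exact absurd (hPpos x hxP) (not_lt.mpr (le_of_lt (hNneg x hxN)))
  set m := α - 1 - n with hmdef
  set r := p - m with hrdef
  have hmp : m + 1 ≤ p := by omega
  have hrp : r ≤ p := by omega
  have hprm : p - r = m := by omega
  have hαnm : α = n + 1 + m := by omega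
  -- the two families of sums
  set SP := ((P.powerset.filter (fun C => C.card ≤ r)).image (fun B => B.sum id)) with hSP
  set SN := (N.powerset.image (fun B => B.sum id)) with hSN
  set G1 := SP.image (fun s => N.sum id + (P.sum id - s)) with hG1
  set G2 := SN.image (fun s => P.sum id + s) with hG2
  have hcardG1 : G1.card = SP.card :=
    Finset.card_image_of_injective _ (fun a b h => by omega)
  have hcardG2 : G2.card = SN.card :=
    Finset.card_image_of_injective _ (fun a b h => by omega)
  have hSPcard : 1 + ∑ i ∈ Ico m p, (i + 1) ≤ SP.card := by
    have := chain_finset P hPpos r (by rw [hpos]; exact hrp)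
    rwa [hpos, hprm] at this
  have hSNcard : 1 + ∑ i ∈ range n, (i + 1) ≤ SN.card := by
    have := neg_card N hNneg
    rwa [hneg] at this
  -- G1 ⊆ sigmaAtLeast A α
  have hG1sub : G1 ⊆ sigmaAtLeast A α := by
    intro x hx
    simp only [hG1, hSP, Finset.mem_image, Finset.mem_filter, Finset.mem_powerset] at hx
    obtain ⟨s, ⟨C, ⟨hC1, hC2⟩, rfl⟩, rfl⟩ := hx
    have hPC : P \ C ⊆ P := Finset.sdiff_subset
    have hdisj2 : Disjoint N (P \ C) := hNPdisj.mono_right hPC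
    have h0U : (0 : ℤ) ∉ N ∪ (P \ C) := by
      simp only [Finset.mem_union]
      push_neg
      exact ⟨h0N, fun h => h0P (hPC h)⟩
    refine Finset.mem_image.mpr ⟨insert 0 (N ∪ (P \ C)), ?_, ?_⟩
    · simp only [Finset.mem_filter, Finset.mem_powerset]
      constructor
      · intro y hy
        simp only [Finset.mem_insert, Finset.mem_union] at hy
        rcases hy with rfl | hy | hy
        · exact h0
        · exact hNsub hy
        · exact hPsub (hPC hy)
      · rw [Finset.card_insert_of_notMem h0U, Finset.card_union_of_disjoint hdisj2,
          Finset.card_sdiff_of_subset hC1, hneg, hpos]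
        omega
    · rw [Finset.sum_insert h0U, Finset.sum_union hdisj2]
      have hsd : (P \ C).sum id + C.sum id = P.sum id := Finset.sum_sdiff hC1
      simp only [id] at hsd ⊢
      omega
  -- G2 ⊆ sigmaAtLeast A α
  have hG2sub : G2 ⊆ sigmaAtLeast A α := by
    intro x hx
    simp only [hG2, hSN, Finset.mem_image, Finset.mem_powerset] at hx
    obtain ⟨s, ⟨B, hB, rfl⟩, rfl⟩ := hx
    have hdisj2 : Disjoint P B := by
      rw [Finset.disjoint_left]
      intro y hyP hyB
      exact absurd (hPpos y hyP) (not_lt.mpr (le_of_lt (hNneg y (hB hyB))))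
    have h0U : (0 : ℤ) ∉ P ∪ B := by
      simp only [Finset.mem_union]
      push_neg
      exact ⟨h0P, fun h => h0N (hB h)⟩
    refine Finset.mem_image.mpr ⟨insert 0 (P ∪ B), ?_, ?_⟩
    · simp only [Finset.mem_filter, Finset.mem_powerset]
      constructor
      · intro y hy
        simp only [Finset.mem_insert, Finset.mem_union] at hy
        rcases hy with rfl | hy | hy
        · exact h0
        · exact hPsub hy
        · exact hNsub (hB hy)
      · rw [Finset.card_insert_of_notMem h0U, Finset.card_union_of_disjoint hdisj2, hpos]
        omega
    · rw [Finset.sum_insert h0U, Finset.sum_union hdisj2]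
      simp only [id]
      omega
  -- intersection is at most a single point
  have hinter : G1 ∩ G2 ⊆ {N.sum id + P.sum id} := by
    intro x hx
    rw [Finset.mem_inter] at hx
    obtain ⟨hx1, hx2⟩ := hx
    simp only [hG1, hSP, Finset.mem_image, Finset.mem_filter, Finset.mem_powerset] at hx1
    obtain ⟨s, ⟨C, ⟨hC1, _⟩, rfl⟩, hxeq1⟩ := hx1
    simp only [hG2, hSN, Finset.mem_image, Finset.mem_powerset] at hx2
    obtain ⟨t, ⟨B, hB, rfl⟩, hxeq2⟩ := hx2
    have hs : 0 ≤ C.sum id :=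
      Finset.sum_nonneg fun i hi => le_of_lt (hPpos i (hC1 hi))
    have ht : N.sum id ≤ B.sum id := by
      have h1 : (N \ B).sum id + B.sum id = N.sum id := Finset.sum_sdiff hB
      have h2 : (N \ B).sum id ≤ 0 :=
        Finset.sum_nonpos fun i hi => le_of_lt (hNneg i (Finset.sdiff_subset hi))
      omega
    simp only [Finset.mem_singleton]
    omega
  -- combine the cardinalities
  have hunion : G1 ∪ G2 ⊆ sigmaAtLeast A α := Finset.union_subset hG1sub hG2sub
  have hintercard : (G1 ∩ G2).card ≤ 1 := by
    calc (G1 ∩ G2).card ≤ ({N.sum id + P.sum id} : Finset ℤ).card :=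
          Finset.card_le_card hinter
      _ = 1 := Finset.card_singleton _
  have hcards : G1.card + G2.card ≤ (sigmaAtLeast A α).card + 1 := by
    have h1 := Finset.card_union_add_card_inter G1 G2
    have h2 := Finset.card_le_card hunion
    omega
  have hfinal : 1 + ∑ i ∈ Ico m p, (i + 1) + ∑ i ∈ range n, (i + 1)
      ≤ (sigmaAtLeast A α).card := by omega
  -- arithmetic
  set Sp := ∑ i ∈ Ico m p, (i + 1) with hSp
  set Sn := ∑ i ∈ range n, (i + 1) with hSn'
  set Sm := ∑ i ∈ range m, (i + 1) with hSm
  set Tp := ∑ i ∈ range p, (i + 1) with hTp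
  have hsplit : Sm + Sp = Tp := by
    rw [hSm, hSp, hTp]
    simp only [Finset.range_eq_Ico]
    exact Finset.sum_Ico_consecutive _ (Nat.zero_le m) (by omega)
  have hgn : (n : ℤ) * ((n : ℤ) + 1) = 2 * (Sn : ℤ) := by exact_mod_cast (gauss n).symm
  have hgp : (p : ℤ) * ((p : ℤ) + 1) = 2 * (Tp : ℤ) := by exact_mod_cast (gauss p).symm
  have hgm : ((m : ℤ)) * ((m : ℤ) + 1) = 2 * (Sm : ℤ) := by exact_mod_cast (gauss m).symm
  have hαm : (α : ℤ) - (n : ℤ) = (m : ℤ) + 1 := by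
    have h : n + 1 + m = α := by omega
    rw [← h]; push_cast; ring
  rw [hgn, hgp, hαm]
  have hgm' : ((m : ℤ) + 1) * ((m : ℤ) + 1 - 1) = 2 * (Sm : ℤ) := by linear_combination hgm
  rw [hgm']
  have h2 : (2 : ℤ) ≠ 0 := two_ne_zero
  rw [Int.mul_ediv_cancel_left _ h2, Int.mul_ediv_cancel_left _ h2,
    Int.mul_ediv_cancel_left _ h2]
  omega
end

section
/- Let A be a finite set of k ≥ 2 integers with 0 ∉ A, and let α be an integer with 0 ≤ α ≤ k. Then |Σ_α(A)| ≥ ⌊(k+1)²/4⌋ − α(α+1)/2 + 1. -/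
/-- All sums of subsets of `P` of size at most `b`. -/
def sumsLE (P : Finset ℤ) (b : ℕ) : Finset ℤ :=
  (P.powerset.filter (fun B => B.card ≤ b)).image (fun B => B.sum id)

lemma mem_sumsLE {P : Finset ℤ} {b : ℕ} {s : ℤ} :
    s ∈ sumsLE P b ↔ ∃ B, B ⊆ P ∧ B.card ≤ b ∧ B.sum id = s := by
  simp [sumsLE, Finset.mem_image, Finset.mem_filter, Finset.mem_powerset]
  tauto

lemma zero_mem_sumsLE (P : Finset ℤ) (b : ℕ) : (0 : ℤ) ∈ sumsLE P b :=
  mem_sumsLE.mpr ⟨∅, Finset.empty_subset _, by simp, by simp⟩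

lemma sumsLE_nonneg {P : Finset ℤ} (hP : ∀ x ∈ P, (0:ℤ) < x) {b : ℕ} {s : ℤ}
    (hs : s ∈ sumsLE P b) : 0 ≤ s := by
  obtain ⟨B, hB, _, rfl⟩ := mem_sumsLE.mp hs
  exact Finset.sum_nonneg fun x hx => le_of_lt (hP x (hB hx))

lemma sumsLE_nonpos {N : Finset ℤ} (hN : ∀ x ∈ N, x < (0:ℤ)) {b : ℕ} {s : ℤ}
    (hs : s ∈ sumsLE N b) : s ≤ 0 := by
  obtain ⟨B, hB, _, rfl⟩ := mem_sumsLE.mp hs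
  exact Finset.sum_nonpos fun x hx => le_of_lt (hN x (hB hx))

lemma sum_le_sum_of_pairwise (X Y : Finset ℤ) (hc : X.card ≤ Y.card)
    (hY : ∀ y ∈ Y, (0:ℤ) < y) (hXY : ∀ x ∈ X, ∀ y ∈ Y, x ≤ y) :
    X.sum id ≤ Y.sum id := by
  obtain ⟨Y', hY'sub, hY'card⟩ := Finset.exists_subset_card_eq hc
  rcases X.eq_empty_or_nonempty with rfl | hXne
  · simpa using Finset.sum_nonneg fun y hy => le_of_lt (hY y hy)
  · have hY'ne : Y'.Nonempty := by
      rw [← Finset.card_pos, hY'card, Finset.card_pos]; exact hXne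
    set m := Y'.min' hY'ne with hm
    have hmY : m ∈ Y' := Y'.min'_mem hY'ne
    calc X.sum id ≤ X.card • m :=
          Finset.sum_le_card_nsmul _ _ _ (fun x hx => hXY x hx m (hY'sub hmY))
      _ = Y'.card • m := by rw [hY'card]
      _ ≤ Y'.sum id := Finset.card_nsmul_le_sum _ _ _ (fun y hy => Y'.min'_le y hy)
      _ ≤ Y.sum id := Finset.sum_le_sum_of_subset_of_nonneg hY'sub
          (fun y hy _ => le_of_lt (hY y hy))

lemma sum_le_top {P B0 B : Finset ℤ} (hP : ∀ x ∈ P, (0:ℤ) < x) (hB0 : B0 ⊆ P)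
    (hB : B ⊆ P) (htop : ∀ x ∈ P, x ∉ B0 → ∀ y ∈ B0, x ≤ y)
    (hcard : B.card ≤ B0.card) : B.sum id ≤ B0.sum id := by
  have h1 := Finset.sum_inter_add_sum_sdiff B B0 id
  have h2 := Finset.sum_inter_add_sum_sdiff B0 B id
  have hic : B ∩ B0 = B0 ∩ B := Finset.inter_comm B B0
  have c1 := Finset.card_inter_add_card_sdiff B B0
  have c2 := Finset.card_inter_add_card_sdiff B0 B
  have key : (B \ B0).sum id ≤ (B0 \ B).sum id := by
    apply sum_le_sum_of_pairwise
    · have : (B ∩ B0).card = (B0 ∩ B).card := by rw [hic]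
      omega
    · exact fun y hy => hP y (hB0 (Finset.mem_sdiff.mp hy).1)
    · intro x hx y hy
      have hx' := Finset.mem_sdiff.mp hx
      have hy' := Finset.mem_sdiff.mp hy
      exact htop x (hB hx'.1) hx'.2 y hy'.1
  rw [← h1, ← h2, hic]
  linarith

lemma exists_top (P : Finset ℤ) : ∀ b, b ≤ P.card →
    ∃ B0, B0 ⊆ P ∧ B0.card = b ∧ ∀ x ∈ P, x ∉ B0 → ∀ y ∈ B0, x ≤ y := by
  intro b
  induction b with
  | zero => exact fun _ => ⟨∅, Finset.empty_subset _, Finset.card_empty, by simp⟩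
  | succ b ih =>
    intro hb
    obtain ⟨B0, hsub, hcard, htop⟩ := ih (by omega)
    have hne : (P \ B0).Nonempty := by
      rw [← Finset.card_pos, Finset.card_sdiff_of_subset hsub]; omega
    set m := (P \ B0).max' hne with hm
    have hmmem : m ∈ P \ B0 := (P \ B0).max'_mem hne
    have hmP : m ∈ P := (Finset.mem_sdiff.mp hmmem).1
    have hmB0 : m ∉ B0 := (Finset.mem_sdiff.mp hmmem).2
    refine ⟨insert m B0, Finset.insert_subset hmP hsub, ?_, ?_⟩
    · rw [Finset.card_insert_of_notMem hmB0, hcard]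
    · intro x hx hxnot y hy
      have hxB0 : x ∉ B0 := fun h => hxnot (Finset.mem_insert_of_mem h)
      rcases Finset.mem_insert.mp hy with rfl | hyB0
      · exact (P \ B0).le_max' x (Finset.mem_sdiff.mpr ⟨hx, hxB0⟩)
      · exact htop x hx hxB0 y hyB0

lemma pos_count (P : Finset ℤ) (hP : ∀ x ∈ P, (0:ℤ) < x) :
    ∀ b, b ≤ P.card →
      2 * (b:ℤ) * P.card + 2 + b ≤ 2 * (sumsLE P b).card + b * b := by
  intro b
  induction b with
  | zero =>
    intro _
    have h0 : 0 < (sumsLE P 0).card := Finset.card_pos.mpr ⟨0, zero_mem_sumsLE P 0⟩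
    push_cast
    have : (1:ℤ) ≤ (sumsLE P 0).card := by exact_mod_cast h0
    linarith
  | succ b ih =>
    intro hb
    have hb' : b ≤ P.card := by omega
    have IH := ih hb'
    obtain ⟨B0, hB0sub, hB0card, htop⟩ := exists_top P b hb'
    set S := B0.sum id with hS
    have hmax : ∀ s ∈ sumsLE P b, s ≤ S := by
      intro s hs
      obtain ⟨B, hBsub, hBcard, rfl⟩ := mem_sumsLE.mp hs
      exact sum_le_top hP hB0sub hBsub htop (by omega)
    set NEW := (P \ B0).image (fun x => x + S) with hNEW
    have hnewcard : NEW.card = P.card - b := by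
      rw [hNEW, Finset.card_image_of_injective _ (add_left_injective S),
        Finset.card_sdiff_of_subset hB0sub, hB0card]
    have hnewsub : NEW ⊆ sumsLE P (b + 1) := by
      intro s hs
      obtain ⟨x, hx, rfl⟩ := Finset.mem_image.mp hs
      have hx' := Finset.mem_sdiff.mp hx
      refine mem_sumsLE.mpr ⟨insert x B0, Finset.insert_subset hx'.1 hB0sub, ?_, ?_⟩
      · rw [Finset.card_insert_of_notMem hx'.2, hB0card]
      · rw [Finset.sum_insert hx'.2]; rfl
    have holdsub : sumsLE P b ⊆ sumsLE P (b + 1) := by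
      intro s hs
      obtain ⟨B, h1, h2, h3⟩ := mem_sumsLE.mp hs
      exact mem_sumsLE.mpr ⟨B, h1, by omega, h3⟩
    have hdisj : Disjoint (sumsLE P b) NEW := by
      rw [Finset.disjoint_left]
      intro s hs hs'
      obtain ⟨x, hx, rfl⟩ := Finset.mem_image.mp hs'
      have hx' := Finset.mem_sdiff.mp hx
      have h1 : x + S ≤ S := hmax _ hs
      have h2 : 0 < x := hP x hx'.1
      linarith
    have hcardle : (sumsLE P b).card + NEW.card ≤ (sumsLE P (b+1)).card := by
      rw [← Finset.card_union_of_disjoint hdisj]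
      exact Finset.card_le_card (Finset.union_subset holdsub hnewsub)
    have hcast : ((sumsLE P b).card : ℤ) + (P.card - b) ≤ (sumsLE P (b+1)).card := by
      have : ((sumsLE P b).card : ℤ) + ((P.card - b : ℕ) : ℤ) ≤ (sumsLE P (b+1)).card := by
        exact_mod_cast hcardle.trans_eq' (by rw [hnewcard])
      rwa [Nat.cast_sub hb'] at this
    push_cast
    push_cast at IH hcast
    nlinarith [hcast, IH]

lemma sumsLE_neg (P : Finset ℤ) (b : ℕ) :
    sumsLE (P.image (fun x => -x)) b = (sumsLE P b).image (fun s => -s) := by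
  have hinj : Function.Injective (fun x : ℤ => -x) := neg_injective
  ext s
  simp only [mem_sumsLE, Finset.mem_image]
  constructor
  · rintro ⟨B, hB, hc, rfl⟩
    refine ⟨-(B.sum id), ⟨B.image (fun x => -x), ?_, ?_, ?_⟩, by ring⟩
    · intro y hy
      obtain ⟨x, hx, rfl⟩ := Finset.mem_image.mp hy
      obtain ⟨z, hz, hzx⟩ := Finset.mem_image.mp (hB hx)
      have : z = -x := by omega
      rwa [this] at hz
    · rw [Finset.card_image_of_injective _ hinj]; exact hc
    · rw [Finset.sum_image (fun x _ y _ h => hinj h)]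
      exact Finset.sum_neg_distrib id
  · rintro ⟨t, ⟨B, hB, hc, rfl⟩, rfl⟩
    refine ⟨B.image (fun x => -x), Finset.image_subset_image hB, ?_, ?_⟩
    · rw [Finset.card_image_of_injective _ hinj]; exact hc
    · rw [Finset.sum_image (fun x _ y _ h => hinj h)]
      exact Finset.sum_neg_distrib id
lemma neg_count (N : Finset ℤ) (hN : ∀ x ∈ N, x < (0:ℤ)) (b : ℕ) (hb : b ≤ N.card) :
    2 * (b:ℤ) * N.card + 2 + b ≤ 2 * (sumsLE N b).card + b * b := by
  have hinj : Function.Injective (fun x : ℤ => -x) := neg_injective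
  have hcardim : (N.image (fun x => -x)).card = N.card :=
    Finset.card_image_of_injective _ hinj
  have hpos : ∀ x ∈ N.image (fun x : ℤ => -x), (0:ℤ) < x := by
    intro x hx
    obtain ⟨z, hz, rfl⟩ := Finset.mem_image.mp hx
    have := hN z hz
    linarith
  have h := pos_count _ hpos b (by rw [hcardim]; exact hb)
  rw [sumsLE_neg] at h
  rw [Finset.card_image_of_injective _ hinj, Finset.card_image_of_injective _ hinj] at h
  exact h


lemma arith1 (p q b a cP cN C : ℤ) (h2 : b ≤ q) (h1 : b ≤ p) (hb0 : 0 ≤ b)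
    (hab : a + b = p + q)
    (hcP : 2*b*q + 2 + b ≤ 2*cP + b*b) (hcN : 2*b*p + 2 + b ≤ 2*cN + b*b)
    (hU : cP + cN ≤ C + 1) :
    (p + q + 1)^2 + 3 ≤ 4*C + 2*(a*(a+1)) := by
  nlinarith [sq_nonneg (p - q), mul_nonneg (sub_nonneg.mpr h1) (sub_nonneg.mpr h2),
    mul_nonneg hb0 (sub_nonneg.mpr h1), mul_nonneg hb0 (sub_nonneg.mpr h2),
    mul_self_nonneg b, hb0]

lemma arith2 (p q b a cP cN C : ℤ) (h2 : b ≤ q) (h1 : p ≤ b) (hp0 : 0 ≤ p)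
    (hab : a + b = p + q)
    (hcP : 2*b*q + 2 + b ≤ 2*cP + b*b) (hcN : 2*p*p + 2 + p ≤ 2*cN + p*p)
    (hU : cP + cN ≤ C + 1) :
    (p + q + 1)^2 + 3 ≤ 4*C + 2*(a*(a+1)) := by
  nlinarith [sq_nonneg (q - p), mul_nonneg hp0 (sub_nonneg.mpr h2),
    mul_self_nonneg p, hp0]

lemma arith4 (p q a cP cN C : ℤ) (hp0 : 0 ≤ p) (hq0 : 0 ≤ q) (ha0 : 0 ≤ a)
    (hcP : 2*q*q + 2 + q ≤ 2*cP + q*q) (hcN : 2*p*p + 2 + p ≤ 2*cN + p*p)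
    (hU : cP + cN ≤ C + 1) :
    (p + q + 1)^2 + 3 ≤ 4*C + 2*(a*(a+1)) := by
  nlinarith [sq_nonneg (p - q), mul_self_nonneg a, ha0]

set_option maxHeartbeats 1000000 in
theorem stmt_11 (k α : ℕ) (hk : 2 ≤ k) (A : Finset ℤ) (hcard : A.card = k)
    (h0 : (0 : ℤ) ∉ A) (hα : α ≤ k) :
    ((sigmaAtLeast A α).card : ℤ) ≥
      ((k : ℤ) + 1) ^ 2 / 4 - (α : ℤ) * ((α : ℤ) + 1) / 2 + 1 := by
  set β := k - α with hβdef
  -- Step 1 : card equality with sums of subsets of size ≤ β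
  have hstep1 : sigmaAtLeast A α = (sumsLE A β).image (fun s => A.sum id - s) := by
    ext s
    simp only [sigmaAtLeast, Finset.mem_image, Finset.mem_filter, Finset.mem_powerset,
      mem_sumsLE]
    constructor
    · rintro ⟨B, ⟨hBsub, hBcard⟩, rfl⟩
      refine ⟨(A \ B).sum id, ⟨A \ B, Finset.sdiff_subset, ?_, rfl⟩, ?_⟩
      · rw [Finset.card_sdiff_of_subset hBsub]; omega
      · have := Finset.sum_sdiff (f := id) hBsub
        linarith
    · rintro ⟨t, ⟨C, hCsub, hCcard, rfl⟩, rfl⟩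
      refine ⟨A \ C, ⟨Finset.sdiff_subset, ?_⟩, ?_⟩
      · rw [Finset.card_sdiff_of_subset hCsub]; omega
      · have := Finset.sum_sdiff (f := id) hCsub
        linarith
  have hcard1 : (sigmaAtLeast A α).card = (sumsLE A β).card := by
    rw [hstep1]
    apply Finset.card_image_of_injective
    intro x y h
    simpa using h
  -- Positive and negative parts
  set P := A.filter (fun x => (0:ℤ) < x) with hPdef
  set N := A.filter (fun x => x < (0:ℤ)) with hNdef
  have hPpos : ∀ x ∈ P, (0:ℤ) < x := fun x hx => (Finset.mem_filter.mp hx).2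
  have hNneg : ∀ x ∈ N, x < (0:ℤ) := fun x hx => (Finset.mem_filter.mp hx).2
  have hpq : P.card + N.card = k := by
    have h1 : N = A.filter (fun x => ¬ (0:ℤ) < x) := by
      ext x
      simp only [hNdef, Finset.mem_filter]
      constructor
      · rintro ⟨h1, h2⟩; exact ⟨h1, by omega⟩
      · rintro ⟨h1, h2⟩
        have hx0 : x ≠ 0 := by rintro rfl; exact h0 h1
        exact ⟨h1, by omega⟩
    rw [h1, Finset.card_filter_add_card_filter_not, hcard]
  set b2 := min β P.card with hb2def
  set b1 := min β N.card with hb1def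
  have hPsub : sumsLE P b2 ⊆ sumsLE A β := by
    intro s hs
    obtain ⟨B, h1, h2, h3⟩ := mem_sumsLE.mp hs
    exact mem_sumsLE.mpr ⟨B, h1.trans (Finset.filter_subset _ _),
      le_trans h2 (min_le_left _ _), h3⟩
  have hNsub : sumsLE N b1 ⊆ sumsLE A β := by
    intro s hs
    obtain ⟨B, h1, h2, h3⟩ := mem_sumsLE.mp hs
    exact mem_sumsLE.mpr ⟨B, h1.trans (Finset.filter_subset _ _),
      le_trans h2 (min_le_left _ _), h3⟩
  have hinter : sumsLE P b2 ∩ sumsLE N b1 = {0} := by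
    ext s
    simp only [Finset.mem_inter, Finset.mem_singleton]
    constructor
    · rintro ⟨h1, h2⟩
      exact le_antisymm (sumsLE_nonpos hNneg h2) (sumsLE_nonneg hPpos h1)
    · rintro rfl
      exact ⟨zero_mem_sumsLE _ _, zero_mem_sumsLE _ _⟩
  have hunion := Finset.card_union_add_card_inter (sumsLE P b2) (sumsLE N b1)
  rw [hinter, Finset.card_singleton] at hunion
  have hUle : (sumsLE P b2 ∪ sumsLE N b1).card ≤ (sumsLE A β).card :=
    Finset.card_le_card (Finset.union_subset hPsub hNsub)
  have hU : (sumsLE P b2).card + (sumsLE N b1).card ≤ (sumsLE A β).card + 1 := by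
    omega
  have hcP := pos_count P hPpos b2 (min_le_right _ _)
  have hcN := neg_count N hNneg b1 (min_le_right _ _)
  -- Arithmetic
  have hkey : ((k:ℤ) + 1) ^ 2 + 3 ≤
      4 * ((sigmaAtLeast A α).card : ℤ) + 2 * ((α:ℤ) * ((α:ℤ) + 1)) := by
    rw [hcard1]
    have hU' : ((sumsLE P b2).card : ℤ) + ((sumsLE N b1).card : ℤ)
        ≤ ((sumsLE A β).card : ℤ) + 1 := by exact_mod_cast hU
    have hβ' : (β:ℤ) = (k:ℤ) - (α:ℤ) := by omega
    have hpq' : (P.card : ℤ) + (N.card : ℤ) = (k:ℤ) := by exact_mod_cast hpq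
    have hp0 : (0:ℤ) ≤ (N.card : ℤ) := by positivity
    have hq0 : (0:ℤ) ≤ (P.card : ℤ) := by positivity
    have hβ0 : (0:ℤ) ≤ (β : ℤ) := by positivity
    rcases le_total β P.card with h2 | h2 <;> rcases le_total β N.card with h1 | h1
    · have e2 : b2 = β := min_eq_left h2
      have e1 : b1 = β := min_eq_left h1
      rw [e2] at hcP hU'; rw [e1] at hcN hU'
      have key := arith1 (N.card:ℤ) (P.card:ℤ) (β:ℤ) (α:ℤ) _ _ ((sumsLE A β).card : ℤ)
        (by exact_mod_cast h2) (by exact_mod_cast h1) hβ0 (by omega) hcP hcN hU'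
      have hkk : (k:ℤ) = (N.card:ℤ) + (P.card:ℤ) := by omega
      rw [hkk]; exact key
    · have e2 : b2 = β := min_eq_left h2
      have e1 : b1 = N.card := min_eq_right h1
      rw [e2] at hcP hU'; rw [e1] at hcN hU'
      have key := arith2 (N.card:ℤ) (P.card:ℤ) (β:ℤ) (α:ℤ) _ _ ((sumsLE A β).card : ℤ)
        (by exact_mod_cast h2) (by exact_mod_cast h1) hp0 (by omega) hcP hcN hU'
      have hkk : (k:ℤ) = (N.card:ℤ) + (P.card:ℤ) := by omega
      rw [hkk]; exact key
    · have e2 : b2 = P.card := min_eq_right h2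
      have e1 : b1 = β := min_eq_left h1
      rw [e2] at hcP hU'; rw [e1] at hcN hU'
      have key := arith2 (P.card:ℤ) (N.card:ℤ) (β:ℤ) (α:ℤ) _ _ ((sumsLE A β).card : ℤ)
        (by exact_mod_cast h1) (by exact_mod_cast h2) hq0 (by omega) hcN hcP (by linarith)
      have hkk : (k:ℤ) = (P.card:ℤ) + (N.card:ℤ) := by omega
      rw [hkk]; exact key
    · have e2 : b2 = P.card := min_eq_right h2
      have e1 : b1 = N.card := min_eq_right h1
      rw [e2] at hcP hU'; rw [e1] at hcN hU'
      have key := arith4 (N.card:ℤ) (P.card:ℤ) (α:ℤ) _ _ ((sumsLE A β).card : ℤ)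
        hp0 hq0 (by positivity) hcP hcN hU'
      have hkk : (k:ℤ) = (N.card:ℤ) + (P.card:ℤ) := by omega
      rw [hkk]; exact key
  have heven : (2:ℤ) ∣ (α:ℤ) * ((α:ℤ) + 1) := (Int.even_mul_succ_self (α:ℤ)).two_dvd
  generalize hA : (α:ℤ) * ((α:ℤ) + 1) = a at hkey heven ⊢
  generalize hS : ((k:ℤ) + 1) ^ 2 = s at hkey ⊢
  omega
end
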